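/- arXiv:1104.4427 — 3 statements merged into one kernel-verified Lean document; each statement's English description precedes it below -/
import Mathlib

section
/- Let Σ be an alphabet and let a and b be two distinct letters of Σ. Then the language {a^i b^j a^i b^j : i, j ∈ ℕ} over Σ is not context-free. -/
universe uT uN
variable {T : Type uT}

namespace CFPump

inductive PT (T : Type uT) (N : Type uN) where
  | leaf (t : T)
  | node (n : N) (ts : List (PT T N))

namespace PT
variable {N : Type uN}

def size : PT T N → ℕ
  | .leaf _ => 1
  | .node _ ts => 1 + (ts.attach.map (fun c => size c.1)).sum
decreasing_by have := List.sizeOf_lt_of_mem c.2; simp_wf; omega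

def height : PT T N → ℕ
  | .leaf _ => 0
  | .node _ ts => 1 + (ts.attach.map (fun c => height c.1)).foldr max 0
decreasing_by have := List.sizeOf_lt_of_mem c.2; simp_wf; omega

def head : PT T N → Symbol T N
  | .leaf t => .terminal t
  | .node n _ => .nonterminal n

def yield : PT T N → List T
  | .leaf t => [t]
  | .node _ ts => (ts.attach.map (fun c => yield c.1)).flatten
decreasing_by have := List.sizeOf_lt_of_mem c.2; simp_wf; omega

@[simp] lemma size_leaf (t : T) : size (leaf t : PT T N) = 1 := by simp [size]
@[simp] lemma size_node (n : N) (ts : List (PT T N)) :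
    size (node n ts) = 1 + (ts.map size).sum := by
  simp only [size, List.attach_map_val]
@[simp] lemma height_leaf (t : T) : height (leaf t : PT T N) = 0 := by simp [height]
@[simp] lemma height_node (n : N) (ts : List (PT T N)) :
    height (node n ts) = 1 + (ts.map height).foldr max 0 := by
  simp only [height, List.attach_map_val]
@[simp] lemma head_leaf (t : T) : head (leaf t : PT T N) = Symbol.terminal t := rfl
@[simp] lemma head_node (n : N) (ts : List (PT T N)) :
    head (node n ts) = Symbol.nonterminal n := rfl
@[simp] lemma yield_leaf (t : T) : yield (leaf t : PT T N) = [t] := by simp [yield]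
@[simp] lemma yield_node (n : N) (ts : List (PT T N)) :
    yield (node n ts) = (ts.map yield).flatten := by
  simp only [yield, List.attach_map_val]

end PT

/-- Subtree relation. -/
inductive SubT {N : Type uN} : PT T N → PT T N → Prop
  | refl (t : PT T N) : SubT t t
  | child {t c : PT T N} (n : N) {ts : List (PT T N)} (hc : c ∈ ts) (h : SubT t c) :
      SubT t (.node n ts)

lemma SubT.size_le {N : Type uN} {t' t : PT T N} (h : SubT t' t) : t'.size ≤ t.size := by
  induction h with
  | refl => exact le_refl _
  | @child c n ts hc h ih =>
    have h1 : c.size ≤ (ts.map PT.size).sum :=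
      List.single_le_sum (fun _ _ => Nat.zero_le _) _ (List.mem_map_of_mem hc)
    simp only [PT.size_node]; omega

/-- Validity of a parse tree w.r.t. a grammar. -/
inductive Valid (g : ContextFreeGrammar.{uT} T) : PT T g.NT → Prop
  | leaf (t : T) : Valid g (.leaf t)
  | node (r : ContextFreeRule T g.NT) (hr : r ∈ g.rules) (ts : List (PT T g.NT))
      (hts : ts.map PT.head = r.output) (hv : ∀ c ∈ ts, Valid g c) :
      Valid g (.node r.input ts)

variable {g : ContextFreeGrammar.{uT} T}

lemma valid_node_elim {n : g.NT} {ts : List (PT T g.NT)} (h : Valid g (.node n ts)) :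
    ∃ r ∈ g.rules, r.input = n ∧ ts.map PT.head = r.output ∧ ∀ c ∈ ts, Valid g c := by
  cases h with
  | node r hr ts hts hv => exact ⟨r, hr, rfl, hts, hv⟩

lemma Valid.subt {t t' : PT T g.NT} (hv : Valid g t) (h : SubT t' t) : Valid g t' := by
  induction h with
  | refl => exact hv
  | child n hc h ih =>
    obtain ⟨r, hr, -, -, hall⟩ := valid_node_elim hv
    exact ih (hall _ hc)

lemma forest_derives {ts : List (PT T g.NT)}
    (h : ∀ c ∈ ts, g.Derives [c.head] (c.yield.map Symbol.terminal)) :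
    g.Derives (ts.map PT.head) ((ts.map PT.yield).flatten.map Symbol.terminal) := by
  induction ts with
  | nil => simpa using ContextFreeGrammar.Derives.refl ([] : List (Symbol T g.NT))
  | cons c ts ih =>
    have h1 := (h c (by simp)).append_right (ts.map PT.head)
    have h2 := (ih (fun d hd => h d (by simp [hd]))).append_left (c.yield.map Symbol.terminal)
    simpa [List.map_append] using h1.trans h2

lemma valid_derives {t : PT T g.NT} (h : Valid g t) :
    g.Derives [t.head] (t.yield.map Symbol.terminal) := by
  induction h with
  | leaf t => simpa using ContextFreeGrammar.Derives.refl [Symbol.terminal t]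
  | node r hr ts hts hv ih =>
    have h0 : g.Produces [Symbol.nonterminal r.input] (ts.map PT.head) := by
      rw [hts]; exact ⟨r, hr, ContextFreeRule.Rewrites.input_output⟩
    exact h0.trans_derives (by simpa using forest_derives ih)

lemma derives_to_forest {u : List (Symbol T g.NT)} {w : List T}
    (h : g.Derives u (w.map Symbol.terminal)) :
    ∃ ts : List (PT T g.NT), (∀ c ∈ ts, Valid g c) ∧ ts.map PT.head = u ∧
      (ts.map PT.yield).flatten = w := by
  induction h using Relation.ReflTransGen.head_induction_on with
  | refl =>
    refine ⟨w.map PT.leaf, by simp [Valid.leaf], by simp [Function.comp_def], ?_⟩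
    simp only [List.map_map, Function.comp_def, PT.yield_leaf]
    induction w with
    | nil => simp
    | cons a w ih => simp [ih]
  | head hp hder ih =>
    obtain ⟨r, hr, hrw⟩ := hp
    obtain ⟨p, q, rfl, rfl⟩ := hrw.exists_parts
    obtain ⟨ts, hval, hheads, hyield⟩ := ih
    rw [show p ++ r.output ++ q = (p ++ r.output) ++ q from by simp, List.map_eq_append_iff] at hheads
    obtain ⟨ts₁, ts₂, rfl, h1, hq⟩ := hheads
    rw [List.map_eq_append_iff] at h1
    obtain ⟨tsp, tso, rfl, hp', ho⟩ := h1
    refine ⟨tsp ++ [PT.node r.input tso] ++ ts₂, ?_, ?_, ?_⟩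
    · intro c hc
      simp only [List.mem_append, List.mem_singleton] at hc
      rcases hc with (hc | rfl) | hc
      · exact hval c (by simp [hc])
      · exact Valid.node r hr tso ho (fun d hd => hval d (by simp [hd]))
      · exact hval c (by simp [hc])
    · simp [hp', hq]
    · simpa [List.flatten_append] using hyield

/-- Minimality of a parse tree among valid trees with the same head and yield. -/
def MinT (g : ContextFreeGrammar.{uT} T) (t : PT T g.NT) : Prop :=
  Valid g t ∧ ∀ t' : PT T g.NT, Valid g t' → t'.head = t.head → t'.yield = t.yield →
    t.size ≤ t'.size

lemma minT_child {n : g.NT} {ts : List (PT T g.NT)} {c : PT T g.NT}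
    (h : MinT g (.node n ts)) (hc : c ∈ ts) : MinT g c := by
  obtain ⟨hv, hmin⟩ := h
  obtain ⟨r, hr, hrn, hts, hall⟩ := valid_node_elim hv
  refine ⟨hall c hc, ?_⟩
  intro c' hv' hh' hy'
  by_contra hlt
  push_neg at hlt
  obtain ⟨l₁, l₂, rfl⟩ := List.append_of_mem hc
  have hvnew : Valid g (.node n (l₁ ++ c' :: l₂)) := by
    rw [← hrn]
    refine Valid.node r hr _ ?_ ?_
    · rw [← hts]; simp [hh']
    · intro d hd
      simp only [List.mem_append, List.mem_cons] at hd
      rcases hd with hd | rfl | hd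
      · exact hall d (by simp [hd])
      · exact hv'
      · exact hall d (by simp [hd])
  have hle := hmin _ hvnew (by simp) (by simp [hy'])
  simp only [PT.size_node, List.map_append, List.sum_append, List.map_cons, List.sum_cons] at hle
  omega

lemma minT_subt {t t' : PT T g.NT} (h : MinT g t) (hs : SubT t' t) : MinT g t' := by
  induction hs with
  | refl => exact h
  | @child c n ts hc hsub ih => exact ih (minT_child h hc)

lemma exists_minT {sym : Symbol T g.NT} {w : List T}
    (hne : ∃ t : PT T g.NT, Valid g t ∧ t.head = sym ∧ t.yield = w) :
    ∃ t : PT T g.NT, MinT g t ∧ t.head = sym ∧ t.yield = w := by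
  classical
  have hP : ∃ m : ℕ, ∃ t : PT T g.NT, (Valid g t ∧ t.head = sym ∧ t.yield = w) ∧ t.size = m := by
    obtain ⟨t, ht⟩ := hne; exact ⟨t.size, t, ht, rfl⟩
  obtain ⟨t, ⟨hv, hh, hy⟩, hsize⟩ := Nat.find_spec hP
  refine ⟨t, ⟨hv, ?_⟩, hh, hy⟩
  intro t' hv' hh' hy'
  rw [hsize]
  exact Nat.find_min' hP ⟨t', ⟨hv', by rw [hh', hh], by rw [hy', hy]⟩, rfl⟩

lemma subt_ctx {t t' : PT T g.NT} (hsub : SubT t' t) (hv : Valid g t) :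
    ∃ u y : List T, t.yield = u ++ t'.yield ++ y ∧
      g.Derives [t.head] (u.map Symbol.terminal ++ [t'.head] ++ y.map Symbol.terminal) := by
  induction hsub with
  | refl => exact ⟨[], [], by simp, by simpa using ContextFreeGrammar.Derives.refl [t'.head]⟩
  | @child c n ts hc hsub ih =>
    obtain ⟨r, hr, hrn, hts, hall⟩ := valid_node_elim hv
    obtain ⟨u', y', hy', hd'⟩ := ih (hall c hc)
    obtain ⟨l₁, l₂, rfl⟩ := List.append_of_mem hc
    have h0 : g.Derives [Symbol.nonterminal n]
        (List.map PT.head l₁ ++ [c.head] ++ List.map PT.head l₂) := by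
      have : g.Produces [Symbol.nonterminal r.input] (List.map PT.head (l₁ ++ c :: l₂)) := by
        rw [hts]; exact ⟨r, hr, ContextFreeRule.Rewrites.input_output⟩
      rw [hrn] at this
      simpa using this.single
    have h1 : g.Derives (List.map PT.head l₁)
        (((l₁.map PT.yield).flatten).map Symbol.terminal) :=
      forest_derives (fun d hd => valid_derives (hall d (by simp [hd])))
    have h2 : g.Derives (List.map PT.head l₂)
        (((l₂.map PT.yield).flatten).map Symbol.terminal) :=
      forest_derives (fun d hd => valid_derives (hall d (by simp [hd])))
    refine ⟨(l₁.map PT.yield).flatten ++ u', y' ++ (l₂.map PT.yield).flatten, ?_, ?_⟩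
    · simp [hy']
    · have hA : g.Derives (List.map PT.head l₁ ++ [c.head] ++ List.map PT.head l₂)
          (((l₁.map PT.yield).flatten).map Symbol.terminal ++ [c.head] ++
            (((l₂.map PT.yield).flatten).map Symbol.terminal)) := by
        have hh1 := h1.append_right ([c.head] ++ List.map PT.head l₂)
        have hh2 := h2.append_left ((((l₁.map PT.yield).flatten).map Symbol.terminal) ++ [c.head])
        have hh1' : g.Derives (List.map PT.head l₁ ++ [c.head] ++ List.map PT.head l₂)
            (((l₁.map PT.yield).flatten).map Symbol.terminal ++ [c.head] ++ List.map PT.head l₂) := by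
          simpa [List.append_assoc] using hh1
        have hh2' : g.Derives
            (((l₁.map PT.yield).flatten).map Symbol.terminal ++ [c.head] ++ List.map PT.head l₂)
            (((l₁.map PT.yield).flatten).map Symbol.terminal ++ [c.head] ++
              (((l₂.map PT.yield).flatten).map Symbol.terminal)) := by
          simpa [List.append_assoc] using hh2
        exact hh1'.trans hh2'
      have hB := (hd'.append_right (((l₂.map PT.yield).flatten).map Symbol.terminal)).append_left
        (((l₁.map PT.yield).flatten).map Symbol.terminal)
      have := (h0.trans hA).trans (by simpa [List.append_assoc] using hB)
      simpa [List.append_assoc, List.map_append] using this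

lemma le_foldr_max {x : ℕ} : ∀ {l : List ℕ}, x ∈ l → x ≤ l.foldr max 0 := by
  intro l
  induction l with
  | nil => simp
  | cons y l ih =>
    intro hx
    rcases List.mem_cons.1 hx with rfl | hx
    · exact le_max_left _ _
    · exact le_trans (ih hx) (le_max_right _ _)

lemma foldr_max_mem : ∀ (l : List ℕ), l.foldr max 0 = 0 ∨ l.foldr max 0 ∈ l := by
  intro l
  induction l with
  | nil => simp
  | cons y l ih =>
    simp only [List.foldr_cons]
    rcases le_total y (l.foldr max 0) with h | h
    · rcases ih with h0 | hm
      · rw [h0] at h ⊢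
        left; omega
      · right; rw [max_eq_right h]; exact List.mem_cons_of_mem _ hm
    · right; rw [max_eq_left h]; exact List.mem_cons_self

lemma exists_max_child {n : g.NT} {ts : List (PT T g.NT)}
    (h : 2 ≤ (PT.node n ts : PT T g.NT).height) :
    ∃ c ∈ ts, c.height = (PT.node n ts : PT T g.NT).height - 1 := by
  simp only [PT.height_node] at h ⊢
  have h1 : (ts.map PT.height).foldr max 0 ≥ 1 := by omega
  rcases foldr_max_mem (ts.map PT.height) with h0 | hm
  · omega
  · obtain ⟨c, hc, hch⟩ := List.mem_map.1 hm
    exact ⟨c, hc, by omega⟩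

lemma exists_subt_height {t : PT T g.NT} {d : ℕ} (hd1 : 1 ≤ d) (hd : d ≤ t.height) :
    ∃ t' : PT T g.NT, SubT t' t ∧ t'.height = d := by
  obtain ⟨f, hf⟩ : ∃ f, t.height ≤ f := ⟨t.height, le_rfl⟩
  induction f generalizing t with
  | zero => omega
  | succ f ih =>
    rcases eq_or_lt_of_le hd with he | hlt
    · exact ⟨t, SubT.refl t, he.symm⟩
    · cases t with
      | leaf x =>
        have hz : (PT.leaf x : PT T g.NT).height = 0 := by simp
        omega
      | node n ts =>
        obtain ⟨c, hc, hch⟩ := exists_max_child (n := n) (ts := ts) (by omega)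
        obtain ⟨t', hsub, hh⟩ := ih (t := c) (by omega) (by omega)
        exact ⟨t', SubT.child n hc hsub, hh⟩

lemma list_sum_le {n : ℕ} : ∀ {l : List ℕ}, (∀ x ∈ l, x ≤ n) → l.sum ≤ l.length * n := by
  intro l
  induction l with
  | nil => simp
  | cons a l ih =>
    intro h
    simp only [List.sum_cons, List.length_cons]
    have h1 := h a (by simp)
    have h2 := ih (fun x hx => h x (by simp [hx]))
    rw [Nat.succ_mul]
    omega

lemma yield_length_le {t : PT T g.NT} (hv : Valid g t) (m : ℕ)
    (hm : ∀ r ∈ g.rules, r.output.length ≤ m) (hm1 : 1 ≤ m) :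
    t.yield.length ≤ m ^ t.height := by
  induction hv with
  | leaf t => simp
  | node r hr ts hts hall ih =>
    have hbound : ∀ c ∈ ts, c.yield.length ≤ m ^ ((ts.map PT.height).foldr max 0) := by
      intro c hc
      exact le_trans (ih c hc)
        (Nat.pow_le_pow_right hm1 (le_foldr_max (List.mem_map_of_mem hc)))
    have hlen : (PT.node r.input ts : PT T g.NT).yield.length
        = ((ts.map PT.yield).map List.length).sum := by
      simp [List.length_flatten]
    have hsum : ((ts.map PT.yield).map List.length).sum
        ≤ ((ts.map PT.yield).map List.length).length * (m ^ ((ts.map PT.height).foldr max 0)) := by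
      apply list_sum_le
      intro x hx
      obtain ⟨yl, hyl, rfl⟩ := List.mem_map.1 hx
      obtain ⟨c, hc, rfl⟩ := List.mem_map.1 hyl
      exact hbound c hc
    simp only [List.length_map] at hsum
    have hts_len : ts.length ≤ m := by
      have := congrArg List.length hts
      simp at this
      rw [this]; exact hm r hr
    have : (PT.node r.input ts : PT T g.NT).yield.length
        ≤ m * m ^ ((ts.map PT.height).foldr max 0) := by
      rw [hlen]
      refine le_trans hsum ?_
      exact Nat.mul_le_mul_right _ hts_len
    have he : m ^ (PT.node r.input ts : PT T g.NT).height
        = m * m ^ ((ts.map PT.height).foldr max 0) := by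
      rw [PT.height_node, pow_add, pow_one]
    omega

lemma derives_splice {X p q out : List (Symbol T g.NT)} {s₀ : Symbol T g.NT}
    (h1 : g.Derives X (p ++ [s₀] ++ q)) (h2 : g.Derives [s₀] out) :
    g.Derives X (p ++ out ++ q) := by
  refine h1.trans ?_
  have := (h2.append_right q).append_left p
  simpa [List.append_assoc] using this

lemma walk [DecidableEq g.NT] :
    ∀ (fuel : ℕ) (t : PT T g.NT), t.height ≤ fuel → Valid g t →
    ∀ seen : Finset g.NT, ((g.rules.image ContextFreeRule.input) \ seen).card < t.height →
      (∃ (A : g.NT) (tA tB : PT T g.NT), SubT tA t ∧ tA.head = Symbol.nonterminal A ∧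
        tB.head = Symbol.nonterminal A ∧ ∃ ts : List (PT T g.NT), tA = PT.node A ts ∧
          ∃ c ∈ ts, SubT tB c)
      ∨ (∃ (A : g.NT) (t' : PT T g.NT), SubT t' t ∧ t'.head = Symbol.nonterminal A ∧
          A ∈ seen) := by
  intro fuel
  induction fuel with
  | zero => intro t hle hv seen hcard; omega
  | succ f ih =>
    intro t hle hv seen hcard
    cases t with
    | leaf z =>
      exfalso
      have hz : (PT.leaf z : PT T g.NT).height = 0 := by simp
      omega
    | node n ts =>
      obtain ⟨r, hr, hrn, hts, hall⟩ := valid_node_elim hv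
      have hnS : n ∈ g.rules.image ContextFreeRule.input := Finset.mem_image.2 ⟨r, hr, hrn⟩
      by_cases hn : n ∈ seen
      · right; exact ⟨n, .node n ts, SubT.refl _, by simp, hn⟩
      · have hmem : n ∈ (g.rules.image ContextFreeRule.input) \ seen :=
          Finset.mem_sdiff.2 ⟨hnS, hn⟩
        have hcard1 : 1 ≤ ((g.rules.image ContextFreeRule.input) \ seen).card :=
          Finset.card_pos.2 ⟨n, hmem⟩
        have hh2 : 2 ≤ (PT.node n ts : PT T g.NT).height := by omega
        obtain ⟨c, hc, hch⟩ := exists_max_child (n := n) (ts := ts) hh2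
        have hfc : c.height ≤ f := by
          have : (PT.node n ts : PT T g.NT).height ≤ f + 1 := hle
          omega
        have hsdiff : (g.rules.image ContextFreeRule.input) \ (insert n seen)
            = ((g.rules.image ContextFreeRule.input) \ seen).erase n := by
          ext z
          simp only [Finset.mem_sdiff, Finset.mem_erase, Finset.mem_insert]
          tauto
        have hcard2 : ((g.rules.image ContextFreeRule.input) \ (insert n seen)).card
            < c.height := by
          rw [hsdiff, Finset.card_erase_of_mem hmem]; omega
        rcases ih c hfc (hall c hc) (insert n seen) hcard2 with
          ⟨A, tA, tB, hsub, h1, h2, ts', htA, c', hc', hsubB⟩ | ⟨A, t', hsub, hh', hA⟩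
        · exact Or.inl ⟨A, tA, tB, SubT.child n hc hsub, h1, h2, ts', htA, c', hc', hsubB⟩
        · rcases Finset.mem_insert.1 hA with rfl | hA
          · exact Or.inl ⟨A, .node A ts, t', SubT.refl _, by simp, hh', ts, rfl, c, hc, hsub⟩
          · exact Or.inr ⟨A, t', SubT.child n hc hsub, hh', hA⟩

theorem pump0 (g : ContextFreeGrammar.{uT} T) :
    ∃ p : ℕ, 1 ≤ p ∧ ∀ w : List T, w ∈ g.language → p < w.length →
      ∃ u v s x y : List T, w = u ++ v ++ s ++ x ++ y ∧ v ++ x ≠ [] ∧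
        (v ++ s ++ x).length ≤ p ∧ u ++ s ++ y ∈ g.language := by
  classical
  set m := max 2 (g.rules.sup fun r => r.output.length) with hm
  set k := (g.rules.image ContextFreeRule.input).card with hk
  have hm2 : 2 ≤ m := le_max_left _ _
  refine ⟨m ^ (k+1), Nat.one_le_pow _ _ (by omega), ?_⟩
  intro w hw hlen
  have hder : g.Derives [Symbol.nonterminal g.initial] (w.map Symbol.terminal) :=
    (g.mem_language_iff w).1 hw
  obtain ⟨ts0, hval0, hheads0, hyield0⟩ := derives_to_forest hder
  obtain ⟨t0, rfl⟩ : ∃ t0, ts0 = [t0] := by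
    cases ts0 with
    | nil => simp at hheads0
    | cons a l =>
      cases l with
      | nil => exact ⟨a, rfl⟩
      | cons b l => simp at hheads0
  simp only [List.map_cons, List.map_nil, List.flatten_cons, List.flatten_nil,
    List.append_nil, List.cons.injEq, and_true] at hheads0 hyield0
  obtain ⟨t, hmin, hhead, hyld⟩ := exists_minT ⟨t0, hval0 t0 (by simp), hheads0, hyield0⟩
  have hmbound : ∀ r ∈ g.rules, r.output.length ≤ m := fun r hr =>
    le_trans (Finset.le_sup (f := fun r => r.output.length) hr) (le_max_right _ _)
  have hylen := yield_length_le hmin.1 m hmbound (by omega)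
  rw [hyld] at hylen
  have hheight : k + 1 < t.height := by
    by_contra hcon
    push_neg at hcon
    have hpow : m ^ t.height ≤ m ^ (k+1) := Nat.pow_le_pow_right (by omega) hcon
    omega
  obtain ⟨t₁, hsub₁, hh₁⟩ := exists_subt_height (t := t) (d := k+1) (by omega) (by omega)
  have hv₁ := hmin.1.subt hsub₁
  have hmin₁ := minT_subt hmin hsub₁
  have hwalk := walk t₁.height t₁ le_rfl hv₁ ∅ (by rw [Finset.sdiff_empty, hh₁, ← hk]; omega)
  rcases hwalk with ⟨A, tA, tB, hsubA, hhA, hhB, tsA, htA, c, hc, hsubB⟩ | ⟨A, t', _, _, hA⟩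
  swap
  · exact absurd hA (Finset.notMem_empty _)
  have hvA : Valid g tA := hv₁.subt hsubA
  have hminA : MinT g tA := minT_subt hmin₁ hsubA
  have hsubB' : SubT tB tA := htA ▸ SubT.child A hc hsubB
  have hvB : Valid g tB := hvA.subt hsubB'
  obtain ⟨u₁, y₁, hE1, hD1⟩ := subt_ctx hsub₁ hmin.1
  obtain ⟨u₂, y₂, hE2, hD2⟩ := subt_ctx hsubA hv₁
  obtain ⟨v, x, hE3, hD3⟩ := subt_ctx hsubB' hvA
  have hDs : g.Derives [Symbol.nonterminal A] (tB.yield.map Symbol.terminal) := by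
    rw [← hhB]; exact valid_derives hvB
  have hvx : v ++ x ≠ [] := by
    intro h0
    rw [List.append_eq_nil_iff] at h0
    obtain ⟨rfl, rfl⟩ := h0
    simp only [List.nil_append, List.append_nil] at hE3
    have hsize := hminA.2 tB hvB (by rw [hhA, hhB]) hE3.symm
    have hlt : tB.size < tA.size := by
      have h1 : tB.size ≤ c.size := hsubB.size_le
      have h2 : c.size ≤ (tsA.map PT.size).sum :=
        List.single_le_sum (fun _ _ => Nat.zero_le _) _ (List.mem_map_of_mem hc)
      rw [htA]; simp only [PT.size_node]; omega
    omega
  refine ⟨u₁ ++ u₂, v, tB.yield, x, y₂ ++ y₁, ?_, hvx, ?_, ?_⟩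
  · rw [← hyld, hE1, hE2, hE3]; simp [List.append_assoc]
  · have hle1 : (v ++ tB.yield ++ x).length ≤ t₁.yield.length := by
      rw [hE2, ← hE3]; simp; omega
    have h2 : t₁.yield.length ≤ m ^ t₁.height := yield_length_le hv₁ m hmbound (by omega)
    rw [hh₁] at h2; omega
  · rw [g.mem_language_iff]
    have d0 : g.Derives [Symbol.nonterminal g.initial]
        (u₁.map Symbol.terminal ++ [t₁.head] ++ y₁.map Symbol.terminal) := by
      rw [← hhead]; exact hD1
    have d1 := derives_splice d0 hD2
    have d1' : g.Derives [Symbol.nonterminal g.initial]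
        ((u₁.map Symbol.terminal ++ u₂.map Symbol.terminal) ++ [tA.head] ++
          (y₂.map Symbol.terminal ++ y₁.map Symbol.terminal)) := by
      simpa [List.append_assoc] using d1
    rw [hhA] at d1'
    have d2 := derives_splice d1' hDs
    simpa [List.map_append, List.append_assoc] using d2

section Application

variable {α : Type*}

lemma strip_run {a b : α} (hab : a ≠ b) :
    ∀ {m n : ℕ} {l l' : List α},
      List.replicate m a ++ b :: l = List.replicate n a ++ b :: l' → m = n ∧ l = l' := by
  intro m
  induction m with
  | zero =>
    intro n l l' h
    cases n with
    | zero => simpa using h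
    | succ n =>
      rw [List.replicate_succ] at h
      simp only [List.replicate_zero, List.nil_append, List.cons_append, List.cons.injEq] at h
      exact absurd h.1 hab.symm
  | succ m ih =>
    intro n l l' h
    cases n with
    | zero =>
      rw [List.replicate_succ] at h
      simp only [List.replicate_zero, List.nil_append, List.cons_append, List.cons.injEq] at h
      exact absurd h.1 hab
    | succ n =>
      rw [List.replicate_succ, List.replicate_succ] at h
      simp only [List.cons_append, List.cons.injEq, true_and] at h
      obtain ⟨he, hl⟩ := ih h
      exact ⟨by omega, hl⟩

lemma count_two [DecidableEq α] {a b : α} (hab : a ≠ b) :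
    ∀ {l : List α}, (∀ c ∈ l, c = a ∨ c = b) → l.count a + l.count b = l.length := by
  intro l
  induction l with
  | nil => simp
  | cons c l ih =>
    intro h
    have hc := h c (by simp)
    have hrest := ih (fun d hd => h d (by simp [hd]))
    rcases hc with rfl | rfl
    · simp only [List.count_cons_self, List.count_cons_of_ne hab, List.length_cons]
      omega
    · simp only [List.count_cons_self, List.count_cons_of_ne (Ne.symm hab), List.length_cons]
      omega

lemma sublist_rep_rep [DecidableEq α] {x y : α} (hxy : x ≠ y) {l : List α} {m n : ℕ}
    (h : List.Sublist l (List.replicate m x ++ List.replicate n y)) :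
    l = List.replicate (l.count x) x ++ List.replicate (l.count y) y ∧
      l.count x ≤ m ∧ l.count y ≤ n := by
  rw [List.sublist_append_iff] at h
  obtain ⟨l₁, l₂, rfl, h1, h2⟩ := h
  obtain ⟨m', hm', rfl⟩ := List.sublist_replicate_iff.1 h1
  obtain ⟨n', hn', rfl⟩ := List.sublist_replicate_iff.1 h2
  have hcx : (List.replicate m' x ++ List.replicate n' y).count x = m' := by
    simp [List.count_replicate, hxy, Ne.symm hxy]
  have hcy : (List.replicate m' x ++ List.replicate n' y).count y = n' := by
    simp [List.count_replicate, hxy, Ne.symm hxy]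
  rw [hcx, hcy]
  exact ⟨rfl, hm', hn'⟩

lemma split_prefix {l₁ l₂ l₃ l₄ : List α} (h : l₁ ++ l₂ = l₃ ++ l₄)
    (hle : l₁.length ≤ l₃.length) : ∃ mid, l₃ = l₁ ++ mid ∧ l₂ = mid ++ l₄ := by
  rcases List.append_eq_append_iff.1 h with ⟨a', ha1, ha2⟩ | ⟨c', hc1, hc2⟩
  · exact ⟨a', ha1, ha2⟩
  · have hlen := congrArg List.length hc1
    simp only [List.length_append] at hlen
    have : c'.length = 0 := by omega
    rw [List.length_eq_zero_iff] at this
    subst this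
    exact ⟨[], by simpa using hc1.symm, by simpa using hc2.symm⟩

lemma not_form1 [DecidableEq α] {a b : α} (hab : a ≠ b) {p m1 m2 i j : ℕ} (hp : 1 ≤ p)
    (hlt : m1 + m2 < 2 * p)
    (h : List.replicate m1 a ++ (List.replicate m2 b ++
          (List.replicate p a ++ List.replicate p b))
       = List.replicate i a ++ (List.replicate j b ++
          (List.replicate i a ++ List.replicate j b))) : False := by
  have e1 : ∀ n : ℕ, (List.replicate n a).count a = n := fun n => by simp
  have e2 : ∀ n : ℕ, (List.replicate n b).count b = n := fun n => by simp
  have e3 : ∀ n : ℕ, (List.replicate n b).count a = 0 := fun n => by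
    simp [List.count_replicate, Ne.symm hab]
  have e4 : ∀ n : ℕ, (List.replicate n a).count b = 0 := fun n => by
    simp [List.count_replicate, hab]
  have hca := congrArg (List.count a) h
  have hcb := congrArg (List.count b) h
  simp only [List.count_append, e1, e2, e3, e4] at hca hcb
  have hi : 1 ≤ i := by omega
  have hj : 1 ≤ j := by omega
  obtain ⟨p', rfl⟩ : ∃ p', p = p' + 1 := ⟨p - 1, by omega⟩
  obtain ⟨j', rfl⟩ : ∃ j', j = j' + 1 := ⟨j - 1, by omega⟩
  obtain ⟨i', rfl⟩ : ∃ i', i = i' + 1 := ⟨i - 1, by omega⟩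
  rcases Nat.eq_zero_or_pos m2 with rfl | hm2
  · rw [List.replicate_zero, List.nil_append, ← List.append_assoc, ← List.replicate_add] at h
    rw [show List.replicate (p' + 1) b = b :: List.replicate p' b from List.replicate_succ,
        show List.replicate (j' + 1) b = b :: List.replicate j' b from
          List.replicate_succ] at h
    rw [List.cons_append] at h
    obtain ⟨h1, -⟩ := strip_run hab h
    omega
  · obtain ⟨m2', rfl⟩ : ∃ m2', m2 = m2' + 1 := ⟨m2 - 1, by omega⟩
    rw [show List.replicate (m2' + 1) b = b :: List.replicate m2' b from List.replicate_succ,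
        show List.replicate (j' + 1) b = b :: List.replicate j' b from
          List.replicate_succ] at h
    rw [List.cons_append, List.cons_append] at h
    obtain ⟨h1, h2⟩ := strip_run hab h
    rw [show List.replicate (p' + 1) a = a :: List.replicate p' a from List.replicate_succ,
        show List.replicate (i' + 1) a = a :: List.replicate i' a from
          List.replicate_succ] at h2
    rw [List.cons_append, List.cons_append] at h2
    obtain ⟨h3, -⟩ := strip_run (Ne.symm hab) h2
    omega

lemma not_form2 [DecidableEq α] {a b : α} (hab : a ≠ b) {p m1 m2 i j : ℕ} (hp : 1 ≤ p)
    (hlt : m1 + m2 < 2 * p)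
    (h : List.replicate p a ++ (List.replicate m2 b ++
          (List.replicate m1 a ++ List.replicate p b))
       = List.replicate i a ++ (List.replicate j b ++
          (List.replicate i a ++ List.replicate j b))) : False := by
  have e1 : ∀ n : ℕ, (List.replicate n a).count a = n := fun n => by simp
  have e2 : ∀ n : ℕ, (List.replicate n b).count b = n := fun n => by simp
  have e3 : ∀ n : ℕ, (List.replicate n b).count a = 0 := fun n => by
    simp [List.count_replicate, Ne.symm hab]
  have e4 : ∀ n : ℕ, (List.replicate n a).count b = 0 := fun n => by
    simp [List.count_replicate, hab]
  have hca := congrArg (List.count a) h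
  have hcb := congrArg (List.count b) h
  simp only [List.count_append, e1, e2, e3, e4] at hca hcb
  have hi : 1 ≤ i := by omega
  have hj : 1 ≤ j := by omega
  obtain ⟨p', rfl⟩ : ∃ p', p = p' + 1 := ⟨p - 1, by omega⟩
  obtain ⟨j', rfl⟩ : ∃ j', j = j' + 1 := ⟨j - 1, by omega⟩
  obtain ⟨i', rfl⟩ : ∃ i', i = i' + 1 := ⟨i - 1, by omega⟩
  rcases Nat.eq_zero_or_pos m2 with rfl | hm2
  · rw [List.replicate_zero, List.nil_append, ← List.append_assoc, ← List.replicate_add] at h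
    rw [show List.replicate (p' + 1) b = b :: List.replicate p' b from List.replicate_succ,
        show List.replicate (j' + 1) b = b :: List.replicate j' b from
          List.replicate_succ] at h
    rw [List.cons_append] at h
    obtain ⟨h1, -⟩ := strip_run hab h
    omega
  · obtain ⟨m2', rfl⟩ : ∃ m2', m2 = m2' + 1 := ⟨m2 - 1, by omega⟩
    rw [show List.replicate (m2' + 1) b = b :: List.replicate m2' b from List.replicate_succ,
        show List.replicate (j' + 1) b = b :: List.replicate j' b from
          List.replicate_succ] at h
    rw [List.cons_append, List.cons_append] at h
    obtain ⟨h1, h2⟩ := strip_run hab h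
    -- h1 : p' + 1 = i' + 1, so i = p; hence m1 = p ≥ 1
    have hm1 : m1 = p' + 1 := by omega
    obtain ⟨m1', rfl⟩ : ∃ m1', m1 = m1' + 1 := ⟨m1 - 1, by omega⟩
    rw [show List.replicate (m1' + 1) a = a :: List.replicate m1' a from List.replicate_succ,
        show List.replicate (i' + 1) a = a :: List.replicate i' a from
          List.replicate_succ] at h2
    rw [List.cons_append, List.cons_append] at h2
    obtain ⟨h3, -⟩ := strip_run (Ne.symm hab) h2
    omega

lemma not_form3 [DecidableEq α] {a b : α} (hab : a ≠ b) {p m1 m2 i j : ℕ} (hp : 1 ≤ p)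
    (hlt : m1 + m2 < 2 * p)
    (h : List.replicate p a ++ (List.replicate p b ++
          (List.replicate m1 a ++ List.replicate m2 b))
       = List.replicate i a ++ (List.replicate j b ++
          (List.replicate i a ++ List.replicate j b))) : False := by
  have e1 : ∀ n : ℕ, (List.replicate n a).count a = n := fun n => by simp
  have e2 : ∀ n : ℕ, (List.replicate n b).count b = n := fun n => by simp
  have e3 : ∀ n : ℕ, (List.replicate n b).count a = 0 := fun n => by
    simp [List.count_replicate, Ne.symm hab]
  have e4 : ∀ n : ℕ, (List.replicate n a).count b = 0 := fun n => by
    simp [List.count_replicate, hab]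
  have hca := congrArg (List.count a) h
  have hcb := congrArg (List.count b) h
  simp only [List.count_append, e1, e2, e3, e4] at hca hcb
  have hi : 1 ≤ i := by omega
  have hj : 1 ≤ j := by omega
  obtain ⟨p', rfl⟩ : ∃ p', p = p' + 1 := ⟨p - 1, by omega⟩
  obtain ⟨j', rfl⟩ : ∃ j', j = j' + 1 := ⟨j - 1, by omega⟩
  obtain ⟨i', rfl⟩ : ∃ i', i = i' + 1 := ⟨i - 1, by omega⟩
  rw [show List.replicate (p' + 1) b = b :: List.replicate p' b from List.replicate_succ,
      show List.replicate (j' + 1) b = b :: List.replicate j' b from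
        List.replicate_succ] at h
  rw [List.cons_append, List.cons_append] at h
  obtain ⟨h1, h2⟩ := strip_run hab h
  -- i = p, so m1 = p ≥ 1
  obtain ⟨m1', rfl⟩ : ∃ m1', m1 = m1' + 1 := ⟨m1 - 1, by omega⟩
  rw [show List.replicate (m1' + 1) a = a :: List.replicate m1' a from List.replicate_succ,
      show List.replicate (i' + 1) a = a :: List.replicate i' a from
        List.replicate_succ] at h2
  rw [List.cons_append, List.cons_append] at h2
  obtain ⟨h3, -⟩ := strip_run (Ne.symm hab) h2
  omega

end Application

end CFPump

/-- For distinct letters `a ≠ b`, the language `{aⁱbʲaⁱbʲ : i, j ∈ ℕ}` is not context-free. -/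
theorem aibj_aibj_not_contextFree {α : Type*} (a b : α) (hab : a ≠ b) :
    ¬ Language.IsContextFree ({w : List α | ∃ i j : ℕ,
        w = List.replicate i a ++ List.replicate j b ++
            List.replicate i a ++ List.replicate j b} : Language α) := by
  classical
  rintro ⟨g, hg⟩
  obtain ⟨p, hp1, hpump⟩ := CFPump.pump0 g
  have hwmem : List.replicate p a ++ List.replicate p b ++ List.replicate p a
      ++ List.replicate p b ∈ g.language := by
    rw [hg]; exact ⟨p, p, rfl⟩
  have hwlen : p < (List.replicate p a ++ List.replicate p b ++ List.replicate p a
      ++ List.replicate p b).length := by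
    simp; omega
  obtain ⟨u, v, s, x, y, hw, hvx, hlen, hmem⟩ := hpump _ hwmem hwlen
  rw [hg] at hmem
  obtain ⟨i, j, hij⟩ := hmem
  have e1 : ∀ n : ℕ, (List.replicate n a).count a = n := fun n => by simp
  have e2 : ∀ n : ℕ, (List.replicate n b).count b = n := fun n => by simp
  have e3 : ∀ n : ℕ, (List.replicate n b).count a = 0 := fun n => by
    simp [List.count_replicate, Ne.symm hab]
  have e4 : ∀ n : ℕ, (List.replicate n a).count b = 0 := fun n => by
    simp [List.count_replicate, hab]
  have hlen' : v.length + s.length + x.length ≤ p := by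
    simp only [List.length_append] at hlen; omega
  have hletters : ∀ c ∈ v ++ x, c = a ∨ c = b := by
    intro c hc
    have hcw : c ∈ List.replicate p a ++ List.replicate p b ++ List.replicate p a
        ++ List.replicate p b := by
      rw [hw]; simp only [List.mem_append] at hc ⊢; tauto
    simp only [List.mem_append, List.mem_replicate] at hcw
    tauto
  have hc2 : v.count a + x.count a + (v.count b + x.count b) = v.length + x.length := by
    have := CFPump.count_two hab hletters
    simpa using this
  have hvxlen : 1 ≤ v.length + x.length := by
    have := List.length_pos_iff.2 hvx
    simp only [List.length_append] at this
    omega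
  rcases le_or_gt (u.length + (v.length + s.length + x.length)) (2*p) with hc1 | hgt1
  · -- window inside the first two blocks
    have hw' : (u ++ v ++ s ++ x) ++ y = (List.replicate p a ++ List.replicate p b)
        ++ (List.replicate p a ++ List.replicate p b) := by
      rw [← hw]; simp [List.append_assoc]
    obtain ⟨mid, hmid, hy⟩ := CFPump.split_prefix hw' (by simp; omega)
    have hs1 : List.Sublist s (v ++ (s ++ x)) :=
      (List.sublist_append_left s x).trans (List.sublist_append_right v (s ++ x))
    have hsub0 := (List.Sublist.refl u).append (hs1.append (List.Sublist.refl mid))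
    have hsub : List.Sublist (u ++ (s ++ mid))
        (List.replicate p a ++ List.replicate p b) := by
      have heq : u ++ ((v ++ (s ++ x)) ++ mid)
          = List.replicate p a ++ List.replicate p b := by
        rw [hmid]; simp [List.append_assoc]
      rw [← heq]; exact hsub0
    obtain ⟨hform, hma, hmb⟩ := CFPump.sublist_rep_rep hab hsub
    have hcm1 := congrArg (List.count a) hmid
    have hcm2 := congrArg (List.count b) hmid
    simp only [List.count_append, e1, e2, e3, e4] at hcm1 hcm2
    have hMa : (u ++ (s ++ mid)).count a = u.count a + (s.count a + mid.count a) := by simp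
    have hMb : (u ++ (s ++ mid)).count b = u.count b + (s.count b + mid.count b) := by simp
    have husy : u ++ s ++ y = (u ++ (s ++ mid))
        ++ (List.replicate p a ++ List.replicate p b) := by
      rw [hy]; simp [List.append_assoc]
    have hfin : List.replicate ((u ++ (s ++ mid)).count a) a ++
        (List.replicate ((u ++ (s ++ mid)).count b) b ++
          (List.replicate p a ++ List.replicate p b))
        = List.replicate i a ++ (List.replicate j b ++
          (List.replicate i a ++ List.replicate j b)) := by
      have h0 : u ++ s ++ y = (List.replicate ((u ++ (s ++ mid)).count a) a ++
          List.replicate ((u ++ (s ++ mid)).count b) b)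
          ++ (List.replicate p a ++ List.replicate p b) := by
        rw [husy, ← hform]
      rw [hij] at h0
      simpa [List.append_assoc] using h0.symm
    exact CFPump.not_form1 hab hp1 (by omega) hfin
  · rcases le_or_gt (u.length + (v.length + s.length + x.length)) (3*p) with hc2' | hgt2
    · -- window inside blocks two and three
      have hA : List.replicate p a ++ (List.replicate p b ++ (List.replicate p a
          ++ List.replicate p b)) = u ++ (v ++ (s ++ (x ++ y))) := by
        simpa [List.append_assoc] using hw
      obtain ⟨u₀, hu0, hrest⟩ := CFPump.split_prefix hA (by simp; omega)
      have hulen := congrArg List.length hu0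
      simp only [List.length_append, List.length_replicate] at hulen
      have hB : (u₀ ++ v ++ s ++ x) ++ y = (List.replicate p b ++ List.replicate p a)
          ++ List.replicate p b := by
        have h' := hrest.symm
        simpa [List.append_assoc] using h'
      obtain ⟨mid, hmid, hy⟩ := CFPump.split_prefix hB (by simp; omega)
      have hs1 : List.Sublist s (v ++ (s ++ x)) :=
        (List.sublist_append_left s x).trans (List.sublist_append_right v (s ++ x))
      have hsub0 := (List.Sublist.refl u₀).append (hs1.append (List.Sublist.refl mid))
      have hsub : List.Sublist (u₀ ++ (s ++ mid))
          (List.replicate p b ++ List.replicate p a) := by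
        have heq : u₀ ++ ((v ++ (s ++ x)) ++ mid)
            = List.replicate p b ++ List.replicate p a := by
          rw [hmid]; simp [List.append_assoc]
        rw [← heq]; exact hsub0
      obtain ⟨hform, hmb, hma⟩ := CFPump.sublist_rep_rep (Ne.symm hab) hsub
      have hcm1 := congrArg (List.count a) hmid
      have hcm2 := congrArg (List.count b) hmid
      simp only [List.count_append, e1, e2, e3, e4] at hcm1 hcm2
      have hMa : (u₀ ++ (s ++ mid)).count a = u₀.count a + (s.count a + mid.count a) := by simp
      have hMb : (u₀ ++ (s ++ mid)).count b = u₀.count b + (s.count b + mid.count b) := by simp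
      have husy : u ++ s ++ y = List.replicate p a
          ++ ((u₀ ++ (s ++ mid)) ++ List.replicate p b) := by
        rw [hu0, hy]; simp [List.append_assoc]
      have hfin : List.replicate p a ++
          (List.replicate ((u₀ ++ (s ++ mid)).count b) b ++
            (List.replicate ((u₀ ++ (s ++ mid)).count a) a ++ List.replicate p b))
          = List.replicate i a ++ (List.replicate j b ++
            (List.replicate i a ++ List.replicate j b)) := by
        have h0 : u ++ s ++ y = List.replicate p a ++
            ((List.replicate ((u₀ ++ (s ++ mid)).count b) b ++
              List.replicate ((u₀ ++ (s ++ mid)).count a) a) ++ List.replicate p b) := by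
          rw [husy, ← hform]
        rw [hij] at h0
        simpa [List.append_assoc] using h0.symm
      exact CFPump.not_form2 hab hp1 (by omega) hfin
    · -- window inside the last two blocks
      have hA : (List.replicate p a ++ List.replicate p b) ++ (List.replicate p a
          ++ List.replicate p b) = u ++ (v ++ (s ++ (x ++ y))) := by
        simpa [List.append_assoc] using hw
      obtain ⟨u₀, hu0, hrest⟩ := CFPump.split_prefix hA (by simp; omega)
      have hulen := congrArg List.length hu0
      simp only [List.length_append, List.length_replicate] at hulen
      have hs1 : List.Sublist s (v ++ (s ++ x)) :=
        (List.sublist_append_left s x).trans (List.sublist_append_right v (s ++ x))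
      have hsub0 := (List.Sublist.refl u₀).append (hs1.append (List.Sublist.refl y))
      have hsub : List.Sublist (u₀ ++ (s ++ y))
          (List.replicate p a ++ List.replicate p b) := by
        have heq : u₀ ++ ((v ++ (s ++ x)) ++ y)
            = List.replicate p a ++ List.replicate p b := by
          rw [hrest]; simp [List.append_assoc]
        rw [← heq]; exact hsub0
      obtain ⟨hform, hma, hmb⟩ := CFPump.sublist_rep_rep hab hsub
      have hcm1 := congrArg (List.count a) hrest
      have hcm2 := congrArg (List.count b) hrest
      simp only [List.count_append, e1, e2, e3, e4] at hcm1 hcm2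
      have hMa : (u₀ ++ (s ++ y)).count a = u₀.count a + (s.count a + y.count a) := by simp
      have hMb : (u₀ ++ (s ++ y)).count b = u₀.count b + (s.count b + y.count b) := by simp
      have husy : u ++ s ++ y = (List.replicate p a ++ List.replicate p b)
          ++ (u₀ ++ (s ++ y)) := by
        rw [hu0]; simp [List.append_assoc]
      have hfin : List.replicate p a ++ (List.replicate p b ++
            (List.replicate ((u₀ ++ (s ++ y)).count a) a ++
              List.replicate ((u₀ ++ (s ++ y)).count b) b))
          = List.replicate i a ++ (List.replicate j b ++
            (List.replicate i a ++ List.replicate j b)) := by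
        have h0 : u ++ s ++ y = (List.replicate p a ++ List.replicate p b)
            ++ (List.replicate ((u₀ ++ (s ++ y)).count a) a ++
              List.replicate ((u₀ ++ (s ++ y)).count b) b) := by
          rw [husy, ← hform]
        rw [hij] at h0
        simpa [List.append_assoc] using h0.symm
      exact CFPump.not_form3 hab hp1 (by omega) hfin
end

section
/- Let L be a regular language over an alphabet Σ whose root √L is infinite. Then the square L^(2) = {p² : p ∈ L} is not a regular language. -/
/-- `wpow v n` is the word `vⁿ`, the `n`-fold concatenation of the word `v` with itself. -/
def wpow {α : Type*} (v : List α) : ℕ → List α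
  | 0 => []
  | n + 1 => v ++ wpow v n

/-- A nonempty word `u` is primitive if `u = vⁿ` implies `n = 1`. -/
def Primitive {α : Type*} (u : List α) : Prop :=
  u ≠ [] ∧ ∀ (v : List α) (n : ℕ), u = wpow v n → n = 1

/-- The root of a language: the set of primitive roots `√u` of the nonempty words `u ∈ L`. -/
def langRoot {α : Type*} (L : Language α) : Language α :=
  {p : List α | Primitive p ∧ ∃ u ∈ L, ∃ d : ℕ, 1 ≤ d ∧ u = wpow p d}

namespace SqAux
variable {α : Type*}

@[simp] lemma wpow_zero (v : List α) : wpow v 0 = [] := rfl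

lemma wpow_succ (v : List α) (n : ℕ) : wpow v (n + 1) = v ++ wpow v n := rfl

@[simp] lemma wpow_one (v : List α) : wpow v 1 = v := by simp [wpow]

lemma wpow_add (v : List α) (a b : ℕ) : wpow v (a + b) = wpow v a ++ wpow v b := by
  induction a with
  | zero => simp
  | succ a ih => rw [Nat.succ_add, wpow_succ, wpow_succ, ih, List.append_assoc]

lemma wpow_comm (v : List α) (n : ℕ) : wpow v n ++ v = v ++ wpow v n := by
  have h1 := wpow_add v n 1
  have h2 := wpow_add v 1 n
  rw [Nat.add_comm] at h2
  simp only [wpow_one] at h1 h2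
  rw [← h1, ← h2]

@[simp] lemma wpow_nil (n : ℕ) : wpow ([] : List α) n = [] := by
  induction n with
  | zero => rfl
  | succ n ih => simp [wpow_succ, ih]

@[simp] lemma length_wpow (v : List α) (n : ℕ) : (wpow v n).length = n * v.length := by
  induction n with
  | zero => simp
  | succ n ih => simp [wpow_succ, ih, Nat.succ_mul, Nat.add_comm]

lemma wpow_ne_nil {v : List α} {n : ℕ} (hv : v ≠ []) (hn : 1 ≤ n) : wpow v n ≠ [] := by
  obtain ⟨k, rfl⟩ : ∃ k, n = k + 1 := ⟨n - 1, by omega⟩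
  simp [wpow_succ, hv]

lemma wpow_wpow (v : List α) (a b : ℕ) : wpow (wpow v a) b = wpow v (a * b) := by
  induction b with
  | zero => simp
  | succ b ih => rw [wpow_succ, ih, Nat.mul_succ, Nat.add_comm, wpow_add]

lemma wpow_base_inj {x y : List α} {n : ℕ} (h : wpow x n = wpow y n)
    (hl : x.length = y.length) (hn : 1 ≤ n) : x = y := by
  obtain ⟨k, rfl⟩ : ∃ k, n = k + 1 := ⟨n - 1, by omega⟩
  rw [wpow_succ, wpow_succ] at h
  exact (List.append_inj h hl).1

lemma prefix_wpow (x : List α) {n : ℕ} (hn : 1 ≤ n) : x <+: wpow x n := by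
  obtain ⟨k, rfl⟩ : ∃ k, n = k + 1 := ⟨n - 1, by omega⟩
  rw [wpow_succ]; exact List.prefix_append x _

lemma sq_eq_sq {x y : List α} (h : x ++ x = y ++ y) : x = y := by
  have hl : x.length = y.length := by
    have := congrArg List.length h; simp at this; omega
  exact (List.append_inj h hl).1

lemma comm_exists_aux (n : ℕ) : ∀ x y : List α, x.length + y.length ≤ n →
    x ++ y = y ++ x → ∃ t a b, x = wpow t a ∧ y = wpow t b := by
  induction n with
  | zero =>
    intro x y hl _
    have hx : x = [] := List.length_eq_zero_iff.mp (by omega)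
    have hy : y = [] := List.length_eq_zero_iff.mp (by omega)
    exact ⟨[], 0, 0, by simp [hx], by simp [hy]⟩
  | succ n ih =>
    intro x y hl h
    by_cases hx : x = []
    · exact ⟨y, 0, 1, by simp [hx], by simp⟩
    by_cases hy : y = []
    · exact ⟨x, 1, 0, by simp, by simp [hy]⟩
    have hx1 : 1 ≤ x.length := List.length_pos_iff.mpr hx
    have hy1 : 1 ≤ y.length := List.length_pos_iff.mpr hy
    rcases le_total x.length y.length with hle | hle
    · have hpx : x <+: y ++ x := h ▸ List.prefix_append x y
      have hpy : y <+: y ++ x := List.prefix_append y x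
      obtain ⟨c, hc⟩ := List.prefix_of_prefix_length_le hpx hpy hle
      -- hc : x ++ c = y
      have hcc : x ++ c = c ++ x := by
        have : x ++ (x ++ c) = (x ++ c) ++ x := by rw [hc]; exact h
        rw [List.append_assoc] at this
        exact List.append_cancel_left this
      have hlen : x.length + c.length ≤ n := by
        have := congrArg List.length hc; simp at this; omega
      obtain ⟨t, a, b, hxa, hcb⟩ := ih x c hlen hcc
      exact ⟨t, a, a + b, hxa, by rw [← hc, hxa, hcb, wpow_add]⟩
    · have hpy : y <+: x ++ y := h.symm ▸ List.prefix_append y x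
      have hpx : x <+: x ++ y := List.prefix_append x y
      obtain ⟨c, hc⟩ := List.prefix_of_prefix_length_le hpy hpx hle
      -- hc : y ++ c = x
      have hcc : y ++ c = c ++ y := by
        have : y ++ (y ++ c) = (y ++ c) ++ y := by rw [hc]; exact h.symm
        rw [List.append_assoc] at this
        exact List.append_cancel_left this
      have hlen : y.length + c.length ≤ n := by
        have := congrArg List.length hc; simp at this; omega
      obtain ⟨t, a, b, hya, hcb⟩ := ih y c hlen hcc
      exact ⟨t, a + b, a, by rw [← hc, hya, hcb, wpow_add], hya⟩

lemma comm_exists {x y : List α} (h : x ++ y = y ++ x) :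
    ∃ t a b, x = wpow t a ∧ y = wpow t b :=
  comm_exists_aux (x.length + y.length) x y le_rfl h

lemma wpow_shift (x c : List α) (n : ℕ) :
    wpow (x ++ c) n ++ x = x ++ wpow (c ++ x) n := by
  induction n with
  | zero => simp
  | succ n ih =>
    rw [wpow_succ, wpow_succ, List.append_assoc, ih]
    simp [List.append_assoc]

lemma pow_eq_pow_comm_core {x y : List α} {m n : ℕ} (hm : 1 ≤ m) (hn : 1 ≤ n)
    (h : wpow x m = wpow y n) (hle : x.length ≤ y.length) : x ++ y = y ++ x := by
  have hy : y <+: wpow x m := h ▸ prefix_wpow y hn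
  have hx : x <+: wpow x m := prefix_wpow x hm
  obtain ⟨c, hc⟩ := List.prefix_of_prefix_length_le hx hy hle
  -- hc : x ++ c = y
  have key : wpow (x ++ c) n = wpow (c ++ x) n := by
    have h1 : wpow (x ++ c) n ++ x = x ++ wpow (c ++ x) n := wpow_shift x c n
    have h2 : wpow (x ++ c) n ++ x = x ++ wpow (x ++ c) n := by
      rw [hc, ← h, wpow_comm]
    rw [h1] at h2
    exact (List.append_cancel_left h2).symm
  have hbase : c ++ x = x ++ c := by
    apply wpow_base_inj key.symm _ hn
    simp [Nat.add_comm]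
  rw [← hc]
  simp only [List.append_assoc]
  rw [hbase]

lemma pow_eq_pow_comm {x y : List α} {m n : ℕ} (hm : 1 ≤ m) (hn : 1 ≤ n)
    (h : wpow x m = wpow y n) : x ++ y = y ++ x := by
  rcases le_total x.length y.length with hle | hle
  · exact pow_eq_pow_comm_core hm hn h hle
  · exact (pow_eq_pow_comm_core hn hm h.symm hle).symm

lemma exists_primitive_root_aux (n : ℕ) : ∀ w : List α, w.length ≤ n → w ≠ [] →
    ∃ p d, Primitive p ∧ 1 ≤ d ∧ w = wpow p d := by
  induction n with
  | zero =>
    intro w hl hw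
    exact absurd (List.length_eq_zero_iff.mp (by omega)) hw
  | succ n ih =>
    intro w hl hw
    by_cases hP : Primitive w
    · exact ⟨w, 1, hP, le_rfl, by simp⟩
    · rw [Primitive, not_and_or] at hP
      rcases hP with h | h
      · exact absurd hw (by simpa using h)
      push_neg at h
      obtain ⟨v, k, hwv, hk⟩ := h
      have hk0 : k ≠ 0 := by rintro rfl; exact hw (by simpa using hwv)
      have hk2 : 2 ≤ k := by omega
      have hv : v ≠ [] := by rintro rfl; exact hw (by simpa using hwv)
      have hv1 : 1 ≤ v.length := List.length_pos_iff.mpr hv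
      have hvl : v.length ≤ n := by
        have := congrArg List.length hwv; simp at this; nlinarith
      obtain ⟨p, d, hp, hd, hvp⟩ := ih v hvl hv
      exact ⟨p, d * k, hp, Nat.one_le_iff_ne_zero.mpr (Nat.mul_ne_zero (by omega) (by omega)), by rw [hwv, hvp, wpow_wpow]⟩

lemma exists_primitive_root {w : List α} (hw : w ≠ []) :
    ∃ p d, Primitive p ∧ 1 ≤ d ∧ w = wpow p d :=
  exists_primitive_root_aux w.length w le_rfl hw

lemma primitive_root_unique {p r : List α} {a b : ℕ} (hp : Primitive p) (hr : Primitive r)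
    (ha : 1 ≤ a) (hb : 1 ≤ b) (h : wpow p a = wpow r b) : p = r := by
  have hcomm := pow_eq_pow_comm ha hb h
  obtain ⟨t, i, j, hpi, hrj⟩ := comm_exists hcomm
  have hi := hp.2 t i hpi
  have hj := hr.2 t j hrj
  rw [hpi, hrj, hi, hj]

-- combination used repeatedly: if x ++ y = y ++ x, y = wpow g k with g primitive, y ≠ [],
-- then x is a power of g
lemma comm_with_pow {x y g : List α} {k : ℕ} (hg : Primitive g) (hk : 1 ≤ k)
    (hy : y = wpow g k) (hyne : y ≠ []) (h : x ++ y = y ++ x) : ∃ e, x = wpow g e := by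
  obtain ⟨t, i, j, hxi, hyj⟩ := comm_exists h
  have ht : t ≠ [] := by rintro rfl; exact hyne (by simpa using hyj)
  have hj1 : 1 ≤ j := by
    rcases Nat.eq_zero_or_pos j with rfl | h1
    · exact absurd (by simpa using hyj) hyne
    · exact h1
  obtain ⟨ρ, γ, hρ, hγ, htρ⟩ := exists_primitive_root ht
  have hyρ : wpow ρ (γ * j) = wpow g k := by rw [← wpow_wpow, ← htρ, ← hyj, hy]
  have : ρ = g := primitive_root_unique hρ hg (Nat.one_le_iff_ne_zero.mpr (Nat.mul_ne_zero (by omega) (by omega))) hk hyρ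
  subst this
  exact ⟨γ * i, by rw [hxi, htρ, wpow_wpow]⟩


lemma middle_cancel {α : Type*} {g u : List α} {a b : ℕ} (hab : a < b)
    (h : wpow g a ++ (u ++ wpow g b) = wpow g b ++ (u ++ wpow g a)) :
    u ++ wpow g (b - a) = wpow g (b - a) ++ u := by
  have hb : wpow g b = wpow g a ++ wpow g (b - a) := by rw [← wpow_add]; congr 1; omega
  have hb' : wpow g b = wpow g (b - a) ++ wpow g a := by rw [← wpow_add]; congr 1; omega
  nth_rewrite 1 [hb'] at h
  rw [hb] at h
  have h2 : wpow g a ++ (u ++ (wpow g (b-a) ++ wpow g a)) =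
      wpow g a ++ (wpow g (b-a) ++ (u ++ wpow g a)) := by
    simpa [List.append_assoc] using h
  have h3 := List.append_cancel_left h2
  have h4 : (u ++ wpow g (b-a)) ++ wpow g a = (wpow g (b-a) ++ u) ++ wpow g a := by
    simpa [List.append_assoc] using h3
  exact List.append_cancel_right h4

lemma inf_fiber {X σ : Type*} [Finite σ] {S : Set X} (hS : S.Infinite) (f : X → σ) :
    ∃ c, {x | x ∈ S ∧ f x = c}.Infinite := by
  by_contra h
  push_neg at h
  have hsub : S ⊆ ⋃ c, {x | x ∈ S ∧ f x = c} := fun x hx => Set.mem_iUnion.mpr ⟨f x, hx, rfl⟩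
  exact hS ((Set.finite_iUnion h).subset hsub)

lemma discard_le {X : Type*} {S : Set X} (hS : S.Infinite) (f : X → ℕ)
    (hinj : Set.InjOn f S) (n : ℕ) : {x | x ∈ S ∧ n < f x}.Infinite := by
  have hfin : {x | x ∈ S ∧ f x ≤ n}.Finite := by
    apply Set.Finite.of_finite_image (f := f)
    · apply (Set.finite_Iic n).subset
      rintro y ⟨x, ⟨hxS, hxn⟩, rfl⟩
      exact hxn
    · exact hinj.mono (fun x hx => hx.1)
  apply (hS.diff hfin).mono
  rintro x ⟨hxS, hxn⟩
  exact ⟨hxS, lt_of_not_ge fun hle => hxn ⟨hxS, hle⟩⟩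

end SqAux

open SqAux in
/-- If `L` is a regular language with infinite root, then its square
`L⁽²⁾ = {pp : p ∈ L}` is not regular. -/
theorem square_not_regular {α : Type*} (L : Language α)
    (hL : L.IsRegular) (hroot : Set.Infinite (langRoot L)) :
    ¬ Language.IsRegular ({w : List α | ∃ p ∈ L, w = p ++ p} : Language α) := by
  rintro ⟨σ, hfin, M, hM⟩
  set F : List α → σ := fun w => M.evalFrom M.start w with hF
  have hSqMem : ∀ w : List α, w ∈ M.accepts ↔ ∃ p ∈ L, w = p ++ p := by
    intro w; rw [hM]; rfl
  -- key1 : same state ⇒ concatenation is a square of an element of L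
  have key1 : ∀ u v : List α, u ∈ L → v ∈ L → F u = F v → ∃ x ∈ L, u ++ v = x ++ x := by
    intro u v hu hv hFuv
    have hvv : v ++ v ∈ M.accepts := (hSqMem _).mpr ⟨v, hv, rfl⟩
    have huv : u ++ v ∈ M.accepts := by
      rw [DFA.mem_accepts] at hvv ⊢
      show M.evalFrom M.start (u ++ v) ∈ M.accept
      rw [M.evalFrom_of_append]
      show M.evalFrom (F u) v ∈ M.accept
      rw [hFuv]
      show M.evalFrom (M.evalFrom M.start v) v ∈ M.accept
      rw [← M.evalFrom_of_append]
      exact hvv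
    exact (hSqMem _).mp huv
  -- key2 : same state, same length ⇒ equal
  have key2 : ∀ u v : List α, u ∈ L → v ∈ L → F u = F v → u.length = v.length → u = v := by
    intro u v hu hv hFuv hl
    obtain ⟨x, hx, hxx⟩ := key1 u v hu hv hFuv
    have hlx : u.length = x.length := by
      have := congrArg List.length hxx; simp at this; omega
    obtain ⟨h1, h2⟩ := List.append_inj hxx hlx
    rw [h1, h2]
  -- key3 : same state, shorter-longer ⇒ v = s ++ u ++ s with u++s, s++u ∈ L
  have key3 : ∀ u v : List α, u ∈ L → v ∈ L → F u = F v → u.length ≤ v.length →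
      ∃ s, v = s ++ (u ++ s) ∧ u ++ s ∈ L ∧ s ++ u ∈ L := by
    intro u v hu hv hFuv hle
    obtain ⟨x, hx, hxx⟩ := key1 u v hu hv hFuv
    have hlx : u.length ≤ x.length := by
      have := congrArg List.length hxx; simp at this; omega
    have hux : u <+: x :=
      List.prefix_of_prefix_length_le (hxx ▸ List.prefix_append u v)
        (List.prefix_append x x) hlx
    obtain ⟨s, hs⟩ := hux
    have hv' : v = s ++ (u ++ s) := by
      have : u ++ v = u ++ (s ++ (u ++ s)) := by
        rw [hxx, ← hs]; simp [List.append_assoc]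
      exact List.append_cancel_left this
    refine ⟨s, hv', by rw [hs]; exact hx, ?_⟩
    obtain ⟨y, hy, hyy⟩ := key1 v u hv hu hFuv.symm
    have hsq : y ++ y = (s ++ u) ++ (s ++ u) := by
      rw [← hyy, hv']; simp [List.append_assoc]
    exact (sq_eq_sq hsq) ▸ hy
  -- choose witnesses for roots
  have hwit : ∀ p : List α, ∃ w d, p ∈ langRoot L → (w ∈ L ∧ 1 ≤ d ∧ w = wpow p d) := by
    intro p
    by_cases hp : p ∈ langRoot L
    · obtain ⟨u, hu, d, hd, hud⟩ := hp.2
      exact ⟨u, d, fun _ => ⟨hu, hd, hud⟩⟩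
    · exact ⟨[], 1, fun h => absurd h hp⟩
  choose uf df huf using hwit
  have hUinj : ∀ p, p ∈ langRoot L → ∀ r, r ∈ langRoot L → uf p = uf r → p = r := by
    intro p hp r hr h
    obtain ⟨_, hdp, hup⟩ := huf p hp
    obtain ⟨_, hdr, hur⟩ := huf r hr
    exact primitive_root_unique hp.1 hr.1 hdp hdr (by rw [← hup, ← hur, h])
  -- pigeonhole 1 : infinitely many roots with the same state
  obtain ⟨q, hRq⟩ := inf_fiber hroot (fun p => F (uf p))
  set Rq : Set (List α) := {p | p ∈ langRoot L ∧ F (uf p) = q} with hRqdef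
  have hlenInj : Set.InjOn (fun p => (uf p).length) Rq := by
    intro p hp r hr h
    exact hUinj p hp.1 r hr.1
      (key2 (uf p) (uf r) (huf p hp.1).1 (huf r hr.1).1 (hp.2.trans hr.2.symm) h)
  obtain ⟨p₁, hp₁⟩ := hRq.nonempty
  set u₁ : List α := uf p₁ with hu₁def
  have hu₁L : u₁ ∈ L := (huf p₁ hp₁.1).1
  have hu₁ne : u₁ ≠ [] := by
    obtain ⟨_, hd, hu⟩ := huf p₁ hp₁.1
    rw [hu₁def, hu]
    exact wpow_ne_nil hp₁.1.1.1 hd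
  -- Rq1 : same state, longer than u₁
  have hRq1 : {p | p ∈ Rq ∧ u₁.length < (uf p).length}.Infinite :=
    discard_le hRq _ hlenInj u₁.length
  set Rq1 : Set (List α) := {p | p ∈ Rq ∧ u₁.length < (uf p).length} with hRq1def
  have hwit2 : ∀ p, ∃ s, p ∈ Rq1 → (uf p = s ++ (u₁ ++ s) ∧ u₁ ++ s ∈ L ∧ s ++ u₁ ∈ L) := by
    intro p
    by_cases hp : p ∈ Rq1
    · obtain ⟨s, h1, h2, h3⟩ := key3 u₁ (uf p) hu₁L (huf p hp.1.1).1
        (hp₁.2.trans hp.1.2.symm) (le_of_lt hp.2)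
      exact ⟨s, fun _ => ⟨h1, h2, h3⟩⟩
    · exact ⟨[], fun h => absurd h hp⟩
  choose sf hsf using hwit2
  obtain ⟨p₂, hp₂⟩ := hRq1.nonempty
  set s₂ : List α := sf p₂ with hs₂def
  have hs₂eq : uf p₂ = s₂ ++ (u₁ ++ s₂) := (hsf p₂ hp₂).1
  have hs₂ne : s₂ ≠ [] := by
    intro h
    have := hp₂.2
    rw [hs₂eq, h] at this
    simp at this
  obtain ⟨g, k, hg, hk, hs₂g⟩ := exists_primitive_root hs₂ne
  -- Rq2 : also longer than uf p₂
  have hRq2 : {p | p ∈ Rq1 ∧ (uf p₂).length < (uf p).length}.Infinite :=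
    discard_le hRq1 _ (hlenInj.mono (fun p hp => hp.1)) (uf p₂).length
  set Rq2 : Set (List α) := {p | p ∈ Rq1 ∧ (uf p₂).length < (uf p).length} with hRq2def
  -- every p in Rq2 has sf p a power of g
  have hwit3 : ∀ p, ∃ mp, p ∈ Rq2 → (1 ≤ mp ∧ sf p = wpow g mp) := by
    intro p
    by_cases hp : p ∈ Rq2
    · obtain ⟨t, ht1, -, -⟩ := key3 (uf p₂) (uf p) (huf p₂ hp₂.1.1).1
        (huf p hp.1.1.1).1 (hp₂.1.2.trans hp.1.1.2.symm) (le_of_lt hp.2)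
      have hsp1 : uf p = sf p ++ (u₁ ++ sf p) := (hsf p hp.1).1
      have heq : sf p ++ (u₁ ++ sf p) = (t ++ s₂) ++ (u₁ ++ (s₂ ++ t)) := by
        rw [← hsp1, ht1, hs₂eq]; simp [List.append_assoc]
      have hlen : (sf p).length = (t ++ s₂).length := by
        have := congrArg List.length heq
        simp only [List.length_append] at this ⊢
        omega
      obtain ⟨h1, h2⟩ := List.append_inj heq hlen
      have h3 : sf p = s₂ ++ t := List.append_cancel_left h2
      have hcomm : t ++ s₂ = s₂ ++ t := by rw [← h1, h3]
      obtain ⟨e, hte⟩ := comm_with_pow hg hk hs₂g hs₂ne hcomm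
      exact ⟨k + e, fun _ => ⟨by omega, by rw [h3, hte, hs₂g, ← wpow_add]⟩⟩
    · exact ⟨1, fun h => absurd h hp⟩
  choose mf hmf using hwit3
  -- the mixed words are in L
  have hY : ∀ p, p ∈ Rq2 → ∀ r, r ∈ Rq2 → p ≠ r →
      wpow g (mf p) ++ (u₁ ++ wpow g (mf r)) ∈ L := by
    intro p hp r hr hne
    obtain ⟨x, hxL, hxx⟩ := key1 (uf p) (uf r) (huf p hp.1.1.1).1 (huf r hr.1.1.1).1
      (hp.1.1.2.trans hr.1.1.2.symm)
    have hupp : uf p = wpow g (mf p) ++ (u₁ ++ wpow g (mf p)) := by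
      rw [(hsf p hp.1).1, (hmf p hp).2]
    have hurr : uf r = wpow g (mf r) ++ (u₁ ++ wpow g (mf r)) := by
      rw [(hsf r hr.1).1, (hmf r hr).2]
    have hmid : wpow g (mf p) ++ wpow g (mf r) = wpow g (mf r) ++ wpow g (mf p) := by
      rw [← wpow_add, ← wpow_add, Nat.add_comm]
    have hYY : uf p ++ uf r =
        (wpow g (mf p) ++ (u₁ ++ wpow g (mf r)))
          ++ (wpow g (mf p) ++ (u₁ ++ wpow g (mf r))) := by
      rw [hupp, hurr]
      calc (wpow g (mf p) ++ (u₁ ++ wpow g (mf p)))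
            ++ (wpow g (mf r) ++ (u₁ ++ wpow g (mf r)))
          = (wpow g (mf p) ++ u₁) ++ ((wpow g (mf p) ++ wpow g (mf r))
            ++ (u₁ ++ wpow g (mf r))) := by simp [List.append_assoc]
        _ = (wpow g (mf p) ++ u₁) ++ ((wpow g (mf r) ++ wpow g (mf p))
            ++ (u₁ ++ wpow g (mf r))) := by rw [hmid]
        _ = (wpow g (mf p) ++ (u₁ ++ wpow g (mf r)))
            ++ (wpow g (mf p) ++ (u₁ ++ wpow g (mf r))) := by simp [List.append_assoc]
    have hx : x = wpow g (mf p) ++ (u₁ ++ wpow g (mf r)) :=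
      sq_eq_sq (hxx.symm.trans hYY)
    exact hx ▸ hxL
  -- mf is injective on Rq2
  have hmfinj : ∀ p, p ∈ Rq2 → ∀ r, r ∈ Rq2 → mf p = mf r → p = r := by
    intro p hp r hr h
    apply hUinj p hp.1.1.1 r hr.1.1.1
    rw [(hsf p hp.1).1, (hsf r hr.1).1, (hmf p hp).2, (hmf r hr).2, h]
  -- pigeonhole 2 and 3
  obtain ⟨a₀, hRq3⟩ := inf_fiber hRq2 (fun p => M.evalFrom M.start (wpow g (mf p) ++ u₁))
  set Rq3 : Set (List α) :=
    {p | p ∈ Rq2 ∧ M.evalFrom M.start (wpow g (mf p) ++ u₁) = a₀} with hRq3def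
  haveI := hRq3.to_subtype
  obtain ⟨px, rx, hnex, heqx⟩ :=
    Finite.exists_ne_map_eq_of_infinite (fun x : Rq3 => M.evalFrom a₀ (wpow g (mf x.val)))
  set p : List α := px.val with hpdef
  set r : List α := rx.val with hrdef
  have hp3 : p ∈ Rq3 := px.property
  have hr3 : r ∈ Rq3 := rx.property
  have hpne : p ≠ r := fun h => hnex (Subtype.ext h)
  -- the two mixed words agree in state, length, and are in L, hence equal
  have hFeq : ∀ y z : List α, y ∈ Rq3 → z ∈ Rq3 →
      F (wpow g (mf y) ++ (u₁ ++ wpow g (mf z)))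
        = M.evalFrom a₀ (wpow g (mf z)) := by
    intro y z hy hz
    show M.evalFrom M.start ((wpow g (mf y)) ++ (u₁ ++ wpow g (mf z)))
      = M.evalFrom a₀ (wpow g (mf z))
    rw [show (wpow g (mf y)) ++ (u₁ ++ wpow g (mf z))
        = ((wpow g (mf y)) ++ u₁) ++ wpow g (mf z) by simp [List.append_assoc]]
    rw [M.evalFrom_of_append, hy.2]
  have hYL : wpow g (mf p) ++ (u₁ ++ wpow g (mf r)) ∈ L := hY p hp3.1 r hr3.1 hpne
  have hYR : wpow g (mf r) ++ (u₁ ++ wpow g (mf p)) ∈ L := hY r hr3.1 p hp3.1 hpne.symm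
  have hFYeq : F (wpow g (mf p) ++ (u₁ ++ wpow g (mf r)))
      = F (wpow g (mf r) ++ (u₁ ++ wpow g (mf p))) := by
    rw [hFeq p r hp3 hr3, hFeq r p hr3 hp3]
    exact heqx.symm
  have hlenYeq : (wpow g (mf p) ++ (u₁ ++ wpow g (mf r))).length
      = (wpow g (mf r) ++ (u₁ ++ wpow g (mf p))).length := by
    simp; omega
  have hYeq : wpow g (mf p) ++ (u₁ ++ wpow g (mf r))
      = wpow g (mf r) ++ (u₁ ++ wpow g (mf p)) :=
    key2 _ _ hYL hYR hFYeq hlenYeq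
  have hmfne : mf p ≠ mf r := fun h => hpne (hmfinj p hp3.1 r hr3.1 h)
  -- extract commutation of u₁ with a positive power of g
  have hcomm : ∃ Δ, 1 ≤ Δ ∧ u₁ ++ wpow g Δ = wpow g Δ ++ u₁ := by
    rcases Nat.lt_or_ge (mf p) (mf r) with hlt | hge
    · exact ⟨mf r - mf p, by omega, middle_cancel hlt hYeq⟩
    · have hlt : mf r < mf p := by omega
      exact ⟨mf p - mf r, by omega, middle_cancel hlt hYeq.symm⟩
  obtain ⟨Δ, hΔ, hcomm⟩ := hcomm
  have hgΔne : wpow g Δ ≠ [] := wpow_ne_nil hg.1 hΔ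
  obtain ⟨e, hu₁e⟩ := comm_with_pow hg hΔ rfl hgΔne hcomm
  -- now uf p and uf r are powers of g, so p = g = r, contradiction
  have hroot_g : ∀ y : List α, y ∈ Rq3 → y = g := by
    intro y hy
    have hupy : uf y = wpow g (mf y + (e + mf y)) := by
      rw [(hsf y hy.1.1).1, (hmf y hy.1).2, hu₁e, wpow_add, wpow_add]
    obtain ⟨-, hdy, huy⟩ := huf y hy.1.1.1.1
    exact primitive_root_unique (a := df y) (b := mf y + (e + mf y)) hy.1.1.1.1.1 hg hdy
      (by have := (hmf y hy.1).1; omega) (by rw [← huy, ← hupy])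
  exact hpne ((hroot_g p hp3).trans (hroot_g r hr3).symm)
end

section
/- (Fazekas) Let L be a regular language over an alphabet Σ. Then pow(L) = {p^k : p ∈ L, k ∈ ℕ} is a regular language if and only if pow(L) \ L is a regular language whose root √(pow(L) \ L) is finite. -/
set_option maxHeartbeats 1000000

/-- The full power of a language: `pow(L) = {pᵏ : p ∈ L, k ∈ ℕ}`. -/
def powL {α : Type*} (L : Language α) : Language α :=
  {w : List α | ∃ p ∈ L, ∃ k : ℕ, w = wpow p k}

namespace Fz
variable {α : Type*}

theorem wpow_succ (v : List α) (n : ℕ) : wpow v (n + 1) = v ++ wpow v n := rfl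

theorem wpow_zero (v : List α) : wpow v 0 = [] := rfl

theorem wpow_one (v : List α) : wpow v 1 = v := by simp [wpow]

theorem wpow_nil (n : ℕ) : wpow ([] : List α) n = [] := by
  induction n with
  | zero => rfl
  | succ n ih => simp [wpow_succ, ih]

theorem wpow_add (v : List α) (a b : ℕ) : wpow v (a + b) = wpow v a ++ wpow v b := by
  induction a with
  | zero => simp [wpow_zero]
  | succ a ih =>
    rw [Nat.succ_add, wpow_succ, wpow_succ, ih, List.append_assoc]

theorem length_wpow (v : List α) (n : ℕ) : (wpow v n).length = n * v.length := by
  induction n with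
  | zero => simp [wpow_zero]
  | succ n ih => rw [wpow_succ, List.length_append, ih, Nat.succ_mul]; omega

theorem wpow_mul (v : List α) (a b : ℕ) : wpow (wpow v a) b = wpow v (a * b) := by
  induction b with
  | zero => rfl
  | succ b ih => rw [wpow_succ, ih, Nat.mul_succ, Nat.add_comm, wpow_add]

theorem wpow_succ' (v : List α) (n : ℕ) : wpow v (n + 1) = wpow v n ++ v := by
  rw [wpow_add, wpow_one]

theorem getElem?_wpow (v : List α) (n i : ℕ) (h : i < (wpow v n).length) :
    (wpow v n)[i]? = v[i % v.length]? := by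
  induction n generalizing i with
  | zero => simp [wpow_zero] at h
  | succ n ih =>
    rw [length_wpow] at h
    rw [wpow_succ, List.getElem?_append]
    by_cases hi : i < v.length
    · rw [if_pos hi, Nat.mod_eq_of_lt hi]
    · rw [if_neg hi]
      push_neg at hi
      have h2 : i - v.length < (wpow v n).length := by
        rw [length_wpow]
        have : (n + 1) * v.length = n * v.length + v.length := by ring
        omega
      rw [ih _ h2]
      congr 1
      conv_rhs => rw [show i = (i - v.length) + v.length by omega]
      rw [Nat.add_mod_right]

/-- `w` has period `q`. -/
def HasPeriod (w : List α) (q : ℕ) : Prop := ∀ i, i + q < w.length → w[i]? = w[i + q]?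

theorem hasPeriod_wpow (v : List α) (n : ℕ) : HasPeriod (wpow v n) v.length := by
  intro i hi
  rw [getElem?_wpow v n i (by omega), getElem?_wpow v n _ hi, Nat.add_mod_right]

theorem getElem?_mod_period {w : List α} {q : ℕ} (hq : 1 ≤ q) (hp : HasPeriod w q) :
    ∀ i, i < w.length → w[i]? = w[i % q]? := by
  intro i
  induction i using Nat.strong_induction_on with
  | _ i ih =>
    intro hi
    by_cases h : i < q
    · rw [Nat.mod_eq_of_lt h]
    · push_neg at h
      have e1 : (i - q) + q = i := by omega
      have e2 := hp (i - q) (by omega)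
      rw [e1] at e2
      rw [← e2, ih (i - q) (by omega) (by omega), Nat.mod_eq_sub_mod h]

theorem wpow_of_period {w : List α} {q : ℕ} (hq : 1 ≤ q) (hd : q ∣ w.length)
    (hp : HasPeriod w q) : w = wpow (w.take q) (w.length / q) := by
  rcases Nat.eq_zero_or_pos w.length with h0 | h0
  · rw [List.length_eq_zero_iff] at h0
    subst h0; simp [wpow_zero]
  have hqle : q ≤ w.length := Nat.le_of_dvd h0 hd
  have htl : (w.take q).length = q := by simp [List.length_take]; omega
  apply List.ext_getElem?
  intro i
  have hlen : (wpow (w.take q) (w.length / q)).length = w.length := by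
    rw [length_wpow, htl, Nat.div_mul_cancel hd]
  by_cases hi : i < w.length
  · rw [getElem?_wpow _ _ _ (by omega), htl, getElem?_mod_period hq hp i hi,
      List.getElem?_take]
    rw [if_pos (Nat.mod_lt _ (by omega))]
  · rw [List.getElem?_eq_none (by omega), List.getElem?_eq_none (by omega)]

theorem hasPeriod_take {w : List α} {q : ℕ} (hp : HasPeriod w q) (m : ℕ) :
    HasPeriod (w.take m) q := by
  intro i hi
  simp only [List.length_take] at hi
  rw [List.getElem?_take, List.getElem?_take, if_pos (by omega), if_pos (by omega)]
  exact hp i (by omega)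

theorem hasPeriod_infix {u w v : List α} {q : ℕ} (hp : HasPeriod (u ++ w ++ v) q) :
    HasPeriod w q := by
  have key : ∀ i, i < w.length → (u ++ w ++ v)[u.length + i]? = w[i]? := by
    intro i hi
    rw [List.append_assoc, List.getElem?_append_right (by omega)]
    rw [Nat.add_sub_cancel_left, List.getElem?_append, if_pos hi]
  intro i hi
  have h2 := hp (u.length + i) (by simp [List.length_append]; omega)
  rw [key i (by omega)] at h2
  rw [show u.length + i + q = u.length + (i + q) by omega, key (i + q) hi] at h2
  exact h2

theorem period_sub {w : List α} {a b : ℕ} (ha : HasPeriod w a) (hb : HasPeriod w b)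
    (hab : a ≤ b) (hlen : a + b ≤ w.length) : HasPeriod w (b - a) := by
  intro i hi
  by_cases h : i + b < w.length
  · have e1 := hb i h
    have e2 := ha (i + (b - a)) (by omega)
    rw [show i + (b - a) + a = i + b by omega] at e2
    rw [e1, e2]
  · have hia : a ≤ i := by omega
    have e1 := ha (i - a) (by omega)
    rw [show i - a + a = i by omega] at e1
    have e2 := hb (i - a) (by omega)
    rw [show i - a + b = i + (b - a) by omega] at e2
    rw [← e1, e2]

theorem finewilf : ∀ (n a b : ℕ) (w : List α), a + b ≤ n → HasPeriod w a → HasPeriod w b →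
    a + b ≤ w.length → HasPeriod w (Nat.gcd a b) := by
  intro n
  induction n using Nat.strong_induction_on with
  | _ n ih =>
    intro a b w hn ha hb hlen
    rcases Nat.eq_zero_or_pos a with rfl | hapos
    · simpa using hb
    rcases Nat.eq_zero_or_pos b with rfl | hbpos
    · simpa [Nat.gcd_zero_right] using ha
    by_cases hab : a ≤ b
    · have hsub := period_sub ha hb hab hlen
      have := ih (a + b - 1) (by omega) a (b - a) w (by omega) ha hsub (by omega)
      rwa [Nat.gcd_sub_self_right hab] at this
    · push_neg at hab
      have hsub := period_sub hb ha (by omega) (by omega) -- gives a - b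
      have := ih (a + b - 1) (by omega) (a - b) b w (by omega) hsub hb (by omega)
      rwa [Nat.gcd_sub_self_left (by omega)] at this

theorem primitive_ne_nil {p : List α} (hp : Primitive p) : p ≠ [] := hp.1

theorem primitive_length_pos {p : List α} (hp : Primitive p) : 0 < p.length :=
  List.length_pos_iff.mpr hp.1

theorem primitive_period {p : List α} {g : ℕ} (hp : Primitive p) (hper : HasPeriod p g)
    (hdvd : g ∣ p.length) (hg : 1 ≤ g) : g = p.length := by
  have := wpow_of_period hg hdvd hper
  have h1 := hp.2 _ _ this
  have := Nat.div_mul_cancel hdvd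
  rw [h1] at this
  omega

theorem take_wpow {p : List α} {a : ℕ} (ha : 1 ≤ a) : (wpow p a).take p.length = p := by
  obtain ⟨a', rfl⟩ : ∃ a', a = a' + 1 := ⟨a - 1, by omega⟩
  rw [wpow_succ, List.take_left]

theorem primitive_eq_of_wpow_eq {p z : List α} {a b : ℕ} (hp : Primitive p) (hz : Primitive z)
    (ha : 1 ≤ a) (hb : 1 ≤ b) (h : wpow p a = wpow z b) : p = z := by
  rcases Nat.eq_or_lt_of_le ha with ha1 | ha2
  · subst ha1
    rw [wpow_one] at h
    have hb1 := hp.2 z b h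
    rw [hb1, wpow_one] at h
    exact h
  rcases Nat.eq_or_lt_of_le hb with hb1 | hb2
  · subst hb1
    rw [wpow_one] at h
    have ha1 := hz.2 p a h.symm
    rw [ha1, wpow_one] at h
    exact h
  · -- a, b ≥ 2
    have hplen := primitive_length_pos hp
    have hzlen := primitive_length_pos hz
    have hlen : (wpow p a).length = a * p.length := length_wpow p a
    have hlen2 : (wpow p a).length = b * z.length := by rw [h, length_wpow]
    have hsum : p.length + z.length ≤ (wpow p a).length := by
      have : 2 * p.length ≤ a * p.length := Nat.mul_le_mul_right _ (by omega)
      have : 2 * z.length ≤ b * z.length := Nat.mul_le_mul_right _ (by omega)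
      omega
    have hperp : HasPeriod (wpow p a) p.length := hasPeriod_wpow p a
    have hperz : HasPeriod (wpow p a) z.length := by rw [h]; exact hasPeriod_wpow z b
    have hg := finewilf (p.length + z.length) _ _ _ le_rfl hperp hperz hsum
    set g := Nat.gcd p.length z.length with hgdef
    have hgpos : 1 ≤ g := Nat.gcd_pos_of_pos_left _ hplen
    have hptake : p = (wpow p a).take p.length := (take_wpow ha).symm
    have hztake : z = (wpow p a).take z.length := by rw [h]; exact (take_wpow hb).symm
    have hperp' : HasPeriod p g := by
      have := hasPeriod_take hg p.length
      rwa [← hptake] at this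
    have hperz' : HasPeriod z g := by
      have := hasPeriod_take hg z.length
      rwa [← hztake] at this
    have hgp : g = p.length := primitive_period hp hperp' (Nat.gcd_dvd_left _ _) hgpos
    have hgz : g = z.length := primitive_period hz hperz' (Nat.gcd_dvd_right _ _) hgpos
    have h1 : p = (wpow p a).take g := by rw [hgp]; exact hptake
    have h2 : z = (wpow p a).take g := by rw [hgz]; exact hztake
    rw [h1, h2]

theorem exists_primitive_root : ∀ (u : List α), u ≠ [] →
    ∃ p d, Primitive p ∧ 1 ≤ d ∧ u = wpow p d := by
  suffices H : ∀ (n : ℕ) (u : List α), u.length ≤ n → u ≠ [] →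
      ∃ p d, Primitive p ∧ 1 ≤ d ∧ u = wpow p d by
    intro u hu; exact H u.length u le_rfl hu
  intro n
  induction n with
  | zero => intro u hu hne; rw [Nat.le_zero, List.length_eq_zero_iff] at hu; exact absurd hu hne
  | succ n ih =>
    intro u hu hne
    by_cases hP : Primitive u
    · exact ⟨u, 1, hP, le_rfl, (wpow_one u).symm⟩
    · rw [Primitive] at hP
      push_neg at hP
      obtain ⟨v, m, huv, hm⟩ := hP hne
      have hm2 : 2 ≤ m := by
        rcases m with _ | _ | m
        · rw [huv, wpow_zero] at hne; exact absurd rfl hne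
        · omega
        · omega
      have hvne : v ≠ [] := by
        intro hv; rw [hv, wpow_nil] at huv; exact hne huv
      have hvpos : 0 < v.length := List.length_pos_iff.mpr hvne
      have hlt : v.length < u.length := by
        rw [huv, length_wpow]; nlinarith
      obtain ⟨p, d, hp, hd, hv⟩ := ih v (by omega) hvne
      exact ⟨p, d * m, hp, Nat.mul_pos hd (by omega), by rw [huv, hv, wpow_mul]⟩



theorem getElem?_append_mid {α : Type*} (u w v : List α) (i : ℕ) (hi : i < w.length) :
    (u ++ w ++ v)[u.length + i]? = w[i]? := by
  rw [List.append_assoc, List.getElem?_append_right (by omega), Nat.add_sub_cancel_left,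
    List.getElem?_append, if_pos hi]

theorem period_chain {w : List α} {q : ℕ} (hw : HasPeriod w q) :
    ∀ (t j : ℕ), j + t * q < w.length → w[j]? = w[j + t * q]? := by
  intro t
  induction t with
  | zero => intro j _; rw [Nat.zero_mul, Nat.add_zero]
  | succ t ih =>
    intro j h
    have hq : j + t * q + q = j + (t+1) * q := by ring
    rcases Nat.eq_zero_or_pos q with rfl | hqpos
    · simpa using ih j (by simpa using h)
    have h1 := ih j (by nlinarith)
    have h2 := hw (j + t * q) (by omega)
    rw [h1, h2, hq]

theorem exists_window_lt (a j q : ℕ) (hq : 1 ≤ q) (hj : j < a) :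
    ∃ t, a ≤ j + t * q ∧ j + t * q < a + q := by
  refine ⟨(a - j + q - 1) / q, ?_, ?_⟩ <;>
  · have h1 := Nat.div_add_mod (a - j + q - 1) q
    have h2 := Nat.mod_lt (a - j + q - 1) (y := q) (by omega)
    have h3 : (a - j + q - 1) / q * q = q * ((a - j + q - 1) / q) := Nat.mul_comm _ _
    omega

theorem exists_window_ge (a j q : ℕ) (hq : 1 ≤ q) (hj : a ≤ j) :
    ∃ t j', j' + t * q = j ∧ a ≤ j' ∧ j' < a + q := by
  refine ⟨(j - a) / q, a + (j - a) % q, ?_, by omega, ?_⟩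
  · have h1 := Nat.div_add_mod (j - a) q
    have h3 : (j - a) / q * q = q * ((j - a) / q) := Nat.mul_comm _ _
    omega
  · have h2 := Nat.mod_lt (j - a) (y := q) (by omega)
    omega

theorem locglob {u F v : List α} {q g : ℕ} (hw : HasPeriod (u ++ F ++ v) q)
    (hF : HasPeriod F g) (hq : 1 ≤ q) (hlen : q + g ≤ F.length) :
    HasPeriod (u ++ F ++ v) g := by
  set w := u ++ F ++ v with hwdef
  have hn : w.length = u.length + F.length + v.length := by simp [hwdef]; omega
  set a := u.length with hadef
  have hwin : ∀ o, o + g < q + g → w[a + o]? = w[a + (o + g)]? := by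
    intro o ho
    rw [getElem?_append_mid u F v o (by omega), getElem?_append_mid u F v (o+g) (by omega)]
    exact hF o (by omega)
  intro i hi
  by_cases hcase : i < a
  · obtain ⟨t, ht1, ht2⟩ := exists_window_lt a i q hq hcase
    have e1 := period_chain hw t i (by omega)
    have e2 := period_chain hw t (i + g) (by omega)
    have e3 := hwin (i + t * q - a) (by omega)
    rw [show a + (i + t * q - a) = i + t * q by omega] at e3
    rw [show a + (i + t * q - a + g) = i + g + t * q by omega] at e3
    rw [e1, e2, e3]
  · push_neg at hcase
    obtain ⟨t, j', hj'1, hj'2, hj'3⟩ := exists_window_ge a i q hq hcase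
    have e1 := period_chain hw t j' (by omega)
    have e2 := period_chain hw t (j' + g) (by omega)
    have e3 := hwin (j' - a) (by omega)
    rw [show a + (j' - a) = j' by omega] at e3
    rw [show a + (j' - a + g) = j' + g by omega] at e3
    rw [hj'1] at e1
    rw [show j' + g + t * q = i + g by omega] at e2
    rw [← e1, ← e2, e3]

/-- The core combinatorial lemma for the length bound: if `p` is primitive,
`p = x ++ y ++ z` with `y` a nonempty proper "interior" factor, and all pumped
words `p^(k-1) x y^i z` are proper powers, we get a contradiction. -/
theorem step2core {p x y z : List α} {k : ℕ} (hp : Primitive p) (hk : 2 ≤ k)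
    (hsplit : p = x ++ y ++ z) (hy : y ≠ []) (hshort : x.length + y.length < p.length)
    (H : ∀ i : ℕ, ∃ q, 1 ≤ q ∧ q ∣ (wpow p (k-1) ++ x ++ wpow y i ++ z).length ∧
      2 * q ≤ (wpow p (k-1) ++ x ++ wpow y i ++ z).length ∧
      HasPeriod (wpow p (k-1) ++ x ++ wpow y i ++ z) q) : False := by
  obtain ⟨yb, s, hybprim, hs, hyeq⟩ := exists_primitive_root y hy
  set u := wpow p (k-1) ++ x with hudef
  have hw : ∀ i, wpow p (k-1) ++ x ++ wpow y i ++ z = u ++ wpow yb (s * i) ++ z := by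
    intro i
    rw [hudef, hyeq, wpow_mul]
  have hybpos : 0 < yb.length := primitive_length_pos hybprim
  have hppos : 0 < p.length := primitive_length_pos hp
  have hylen : y.length = s * yb.length := by rw [hyeq, length_wpow]
  have hypos : 0 < y.length := List.length_pos_iff.mpr hy
  have hulen : u.length = (k-1) * p.length + x.length := by
    rw [hudef, List.length_append, length_wpow]
  have hup : p.length ≤ u.length := by
    have : 1 * p.length ≤ (k-1) * p.length := Nat.mul_le_mul_right _ (by omega)
    omega
  set Y := u.take yb.length with hYdef
  have hYlen : Y.length = yb.length := by
    rw [hYdef, List.length_take]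
    have : yb.length ≤ y.length := by nlinarith
    omega
  -- main sub-result: for large i, w i is a power of Y
  have main : ∀ i, u.length + z.length + 2 * yb.length ≤ i →
      wpow p (k-1) ++ x ++ wpow y i ++ z
        = wpow Y ((u.length + s * i * yb.length + z.length) / yb.length) := by
    intro i hi
    obtain ⟨q, hq1, hqdvd, hq2, hqper⟩ := H i
    rw [hw i] at hqdvd hq2 hqper
    have hlenw : (u ++ wpow yb (s * i) ++ z).length
        = u.length + s * i * yb.length + z.length := by
      simp [List.length_append, length_wpow]; omega
    have hFlen : (wpow yb (s * i)).length = s * i * yb.length := by rw [length_wpow]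
    have hsi : i ≤ s * i * yb.length := by nlinarith
    have hbig : q + yb.length ≤ s * i * yb.length := by omega
    have hFper : HasPeriod (wpow yb (s * i)) q := hasPeriod_infix hqper
    have hgcd := finewilf (yb.length + q) _ _ _ le_rfl (hasPeriod_wpow yb (s * i)) hFper
      (by omega)
    have hsipos : 1 ≤ s * i := by nlinarith
    have hybtake : yb = (wpow yb (s * i)).take yb.length := (take_wpow hsipos).symm
    have hybper : HasPeriod yb (Nat.gcd yb.length q) := by
      have := hasPeriod_take hgcd yb.length
      rwa [← hybtake] at this
    have hgeq : Nat.gcd yb.length q = yb.length :=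
      primitive_period hybprim hybper (Nat.gcd_dvd_left _ _)
        (Nat.gcd_pos_of_pos_left _ hybpos)
    have hybdvdq : yb.length ∣ q := by rw [← hgeq]; exact Nat.gcd_dvd_right _ _
    have hglob : HasPeriod (u ++ wpow yb (s * i) ++ z) yb.length := by
      apply locglob hqper (hasPeriod_wpow yb (s * i)) hq1
      omega
    have hybdvdlen : yb.length ∣ (u ++ wpow yb (s * i) ++ z).length :=
      dvd_trans hybdvdq hqdvd
    have := wpow_of_period hybpos hybdvdlen hglob
    rw [hw i, this]
    congr 1
    · rw [hYdef]
      have hle := Nat.le_mul_of_pos_left yb.length hs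
      have : yb.length ≤ u.length := by omega
      rw [List.append_assoc, List.take_append_of_le_length this]
    · rw [hlenw]
  -- instantiate at I and I+1
  set I := u.length + z.length + 2 * yb.length with hIdef
  have hmainI := main I le_rfl
  have hmainI1 := main (I + 1) (by omega)
  rw [hw I] at hmainI
  rw [hw (I+1)] at hmainI1
  set m := (u.length + s * I * yb.length + z.length) / yb.length with hmdef
  have hmlen : (u.length + s * I * yb.length + z.length) = m * yb.length := by
    have hdvd : yb.length ∣ u.length + s * I * yb.length + z.length := by
      have h1 : (u ++ wpow yb (s * I) ++ z).length = u.length + s * I * yb.length + z.length := by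
        simp [List.length_append, length_wpow]; omega
      rw [← h1, hmainI, length_wpow, hYlen]
      exact Dvd.intro_left m rfl
    rw [hmdef, Nat.div_mul_cancel hdvd]
  have hm1 : (u.length + s * (I+1) * yb.length + z.length) / yb.length = m + s := by
    have : u.length + s * (I+1) * yb.length + z.length
        = (u.length + s * I * yb.length + z.length) + s * yb.length := by ring
    rw [this, hmlen, ← Nat.add_mul, Nat.mul_div_cancel _ hybpos]
  rw [hm1] at hmainI1
  -- derive u ++ y = Y^s ++ u
  have hWI : u ++ wpow yb (s * I) ++ z = wpow Y m := hmainI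
  have hWI1 : u ++ wpow yb (s * (I+1)) ++ z = wpow Y (m + s) := hmainI1
  have hkey : u ++ y = wpow Y s ++ u := by
    have e1 : wpow yb (s * (I+1)) = wpow yb s ++ wpow yb (s * I) := by
      rw [← wpow_add]; congr 1; ring
    have e2 : (u ++ wpow yb s) ++ (wpow yb (s * I) ++ z)
        = (wpow Y s ++ u) ++ (wpow yb (s * I) ++ z) := by
      have lhs : (u ++ wpow yb s) ++ (wpow yb (s * I) ++ z)
          = u ++ wpow yb (s * (I+1)) ++ z := by
        rw [e1]; simp [List.append_assoc]
      have rhs : (wpow Y s ++ u) ++ (wpow yb (s * I) ++ z)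
          = wpow Y s ++ (u ++ wpow yb (s * I) ++ z) := by simp [List.append_assoc]
      rw [lhs, rhs, hWI, hWI1, Nat.add_comm m s, wpow_add]
    have := List.append_cancel_right e2
    rw [← hyeq] at this
    exact this
  -- iterate: u ++ y^c = Y^(s*c) ++ u
  have hiter : ∀ c, u ++ wpow y c = wpow Y (s * c) ++ u := by
    intro c
    induction c with
    | zero => simp [wpow_zero]
    | succ c ih =>
      have : u ++ wpow y (c + 1) = (u ++ y) ++ wpow y c := by
        rw [wpow_succ]; simp [List.append_assoc]
      rw [this, hkey, List.append_assoc, ih, ← List.append_assoc, ← wpow_add]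
      congr 2
      ring
  -- conclude u ++ z = Y^(m - s*I)
  have hsImI : s * I ≤ m := by
    have h1 : s * I * yb.length ≤ m * yb.length := by omega
    exact Nat.le_of_mul_le_mul_right (by omega) hybpos
  have huz : u ++ z = wpow Y (m - s * I) := by
    have e1 : u ++ wpow yb (s * I) ++ z = (u ++ wpow y I) ++ z := by
      rw [hyeq, wpow_mul]
    have e2 : (u ++ wpow y I) ++ z = wpow Y (s * I) ++ (u ++ z) := by
      rw [hiter I]; simp [List.append_assoc]
    have e3 : wpow Y m = wpow Y (s * I) ++ wpow Y (m - s * I) := by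
      rw [← wpow_add]; congr 1; omega
    apply List.append_cancel_left (as := wpow Y (s * I))
    rw [← e2, ← e1, hWI, e3]
  -- hence p^k = Y^(s + (m - s*I))
  have hfin : wpow p k = wpow Y (s + (m - s * I)) := by
    have e1 : wpow p k = u ++ wpow y 1 ++ z := by
      rw [wpow_one, hudef]
      conv_lhs => rw [show k = (k-1) + 1 by omega, wpow_succ']
      rw [hsplit]
      simp [List.append_assoc]
    have e2 : u ++ wpow y 1 ++ z = wpow Y (s * 1) ++ (u ++ z) := by
      rw [List.append_assoc, ← List.append_assoc u, hiter 1]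
      simp [List.append_assoc]
    rw [e1, e2, huz, Nat.mul_one, ← wpow_add]
  -- contradiction via primitive roots
  have hYne : Y ≠ [] := by
    intro hY
    rw [hY] at hYlen
    simp at hYlen
    omega
  obtain ⟨ζ, c, hζprim, hc, hYζ⟩ := exists_primitive_root Y hYne
  rw [hYζ, wpow_mul] at hfin
  have hpζ : p = ζ := primitive_eq_of_wpow_eq hp hζprim (by omega)
    (by have : 1 ≤ c * (s + (m - s * I)) := Nat.mul_pos hc (by omega); omega) hfin
  have hζlen : ζ.length ≤ Y.length := by
    have h1 : Y.length = c * ζ.length := by rw [hYζ, length_wpow]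
    have h2 := Nat.le_mul_of_pos_left ζ.length hc
    omega
  rw [hpζ] at hshort hppos
  have h3 := Nat.le_mul_of_pos_left yb.length hs
  omega


/-- Core combinatorial lemma for injectivity: if `j < |p|`,
`b` differs from `p[j]`, `k ≥ 2`, and for `T ∈ {0, k-1}` the word `p^k` with
position `T|p|+j` replaced by `b` is a proper power, then `False`. -/
theorem hybrid_core {p : List α} {j k : ℕ} {b : α}
    (hj : j < p.length) (hb : p[j]? ≠ some b) (hk : 2 ≤ k)
    (H : ∀ T, T < k → ∃ q, 1 ≤ q ∧ q ∣ k * p.length ∧ 2 * q ≤ k * p.length ∧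
        HasPeriod ((wpow p k).set (T * p.length + j) b) q) : False := by
  have hℓpos : 0 < p.length := by omega
  have h2l : 2 * p.length ≤ k * p.length := Nat.mul_le_mul_right p.length hk
  have e1 : (k-1) * p.length = k * p.length - p.length := by
    rw [Nat.sub_mul, Nat.one_mul]
  have e2 : (k-2) * p.length = k * p.length - 2 * p.length := by
    rw [Nat.sub_mul]
  have hlenW : ∀ T : ℕ, ((wpow p k).set (T * p.length + j) b).length = k * p.length := by
    intro T; rw [List.length_set, length_wpow]
  have hmod : ∀ m r : ℕ, (m * p.length + r) % p.length = r % p.length := by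
    intro m r; rw [Nat.mul_comm, Nat.mul_add_mod]
  have hval : ∀ T x : ℕ, x < k * p.length → ((wpow p k).set (T * p.length + j) b)[x]? =
      if T * p.length + j = x then some b else p[x % p.length]? := by
    intro T x hx
    rw [List.getElem?_set]
    by_cases hc : T * p.length + j = x
    · rw [if_pos hc, if_pos hc, if_pos (by rw [length_wpow]; omega)]
    · rw [if_neg hc, if_neg hc, getElem?_wpow p k x (by rw [length_wpow]; exact hx)]
  -- no slot period is a multiple of the root length
  have hnodvd : ∀ T q, T < k → 1 ≤ q → 2 * q ≤ k * p.length →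
      HasPeriod ((wpow p k).set (T * p.length + j) b) q → ¬ p.length ∣ q := by
    intro T q hT hq1 hq2 hper hdvd
    obtain ⟨c, rfl⟩ := hdvd
    have hcpos : 0 < c := by
      rcases Nat.eq_zero_or_pos c with rfl | h
      · simp at hq1
      · exact h
    have hlq : p.length ≤ p.length * c := Nat.le_mul_of_pos_right p.length hcpos
    have hTl : T * p.length + p.length ≤ k * p.length := by
      have h1 := Nat.mul_le_mul_right p.length (show T + 1 ≤ k by omega)
      have h2 : (T + 1) * p.length = T * p.length + p.length := by ring
      omega
    by_cases hcase : T * p.length + j + p.length * c < k * p.length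
    · have rel := hper (T * p.length + j) (by rw [hlenW]; exact hcase)
      rw [hval T (T * p.length + j) (by omega),
        hval T (T * p.length + j + p.length * c) (by omega),
        if_pos rfl, if_neg (by omega)] at rel
      rw [show T * p.length + j + p.length * c = (T + c) * p.length + j by ring,
        hmod, Nat.mod_eq_of_lt hj] at rel
      exact hb rel.symm
    · push_neg at hcase
      have hsc : p.length * c ≤ T * p.length + j := by omega
      have hTc : c ≤ T := by
        by_contra hcT
        push_neg at hcT
        have h1 := Nat.mul_le_mul_right p.length (show T + 1 ≤ c by omega)
        have h2 : (T + 1) * p.length = T * p.length + p.length := by ring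
        have h4 : c * p.length = p.length * c := Nat.mul_comm _ _
        omega
      have rel := hper (T * p.length + j - p.length * c) (by rw [hlenW]; omega)
      rw [show T * p.length + j - p.length * c + p.length * c = T * p.length + j by omega]
        at rel
      rw [hval T (T * p.length + j - p.length * c) (by omega),
        hval T (T * p.length + j) (by omega),
        if_pos rfl, if_neg (by omega)] at rel
      rw [show T * p.length + j - p.length * c = (T - c) * p.length + j by
          have h1 : (T - c) * p.length = T * p.length - c * p.length := Nat.sub_mul T c _
          have h2 : c * p.length = p.length * c := Nat.mul_comm _ _
          have h3 := Nat.mul_le_mul_right p.length hTc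
          omega,
        hmod, Nat.mod_eq_of_lt hj] at rel
      exact hb rel
  -- analysis of the T = 0 hybrid
  obtain ⟨q, hq1, hqdvd, hq2, hper0⟩ := H 0 (by omega)
  have hnd0 : ¬ p.length ∣ q := hnodvd 0 q (by omega) hq1 hq2 hper0
  have hA1 : p[(j + q) % p.length]? = some b := by
    have rel := hper0 j (by rw [hlenW]; omega)
    rw [hval 0 j (by omega), hval 0 (j + q) (by omega),
      if_pos (by omega), if_neg (by omega)] at rel
    exact rel.symm
  have hA2 : k * p.length ≤ p.length + j + q := by
    by_contra hcon
    push_neg at hcon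
    have rel := hper0 (p.length + j) (by rw [hlenW]; omega)
    rw [hval 0 (p.length + j) (by omega), hval 0 (p.length + j + q) (by omega),
      if_neg (by omega), if_neg (by omega)] at rel
    have m1 : (p.length + j) % p.length = j := by
      rw [show p.length + j = 1 * p.length + j by ring, hmod, Nat.mod_eq_of_lt hj]
    have m2 : (p.length + j + q) % p.length = (j + q) % p.length := by
      rw [show p.length + j + q = 1 * p.length + (j + q) by ring, hmod]
    rw [m1, m2, hA1] at rel
    exact hb rel
  have hA3 : j < q := by
    by_contra hcon
    push_neg at hcon
    have hqℓ : q ≠ p.length := fun h => hnd0 (h ▸ dvd_refl p.length)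
    have rel1 := hper0 (j - q) (by rw [hlenW]; omega)
    rw [show j - q + q = j by omega] at rel1
    rw [hval 0 (j - q) (by omega), hval 0 j (by omega),
      if_neg (by omega), if_pos (by omega)] at rel1
    have m1 : (j - q) % p.length = j - q := Nat.mod_eq_of_lt (by omega)
    rw [m1] at rel1
    have rel2 := hper0 (p.length + j - q) (by rw [hlenW]; omega)
    rw [show p.length + j - q + q = p.length + j by omega] at rel2
    rw [hval 0 (p.length + j - q) (by omega), hval 0 (p.length + j) (by omega),
      if_neg (by omega), if_neg (by omega)] at rel2
    have m2 : (p.length + j - q) % p.length = j - q := by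
      rw [show p.length + j - q = 1 * p.length + (j - q) by omega, hmod,
        Nat.mod_eq_of_lt (by omega : j - q < p.length)]
    have m3 : (p.length + j) % p.length = j := by
      rw [show p.length + j = 1 * p.length + j by ring, hmod, Nat.mod_eq_of_lt hj]
    rw [m2, m3, rel1] at rel2
    exact hb rel2.symm
  -- analysis of the T = k-1 hybrid
  obtain ⟨q', hq1', hqdvd', hq2', hper1⟩ := H (k-1) (by omega)
  have hnd1 : ¬ p.length ∣ q' := hnodvd (k-1) q' (by omega) hq1' hq2' hper1
  have hB1 : p[((k-1) * p.length + j - q') % p.length]? = some b := by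
    have rel := hper1 ((k-1) * p.length + j - q') (by rw [hlenW]; omega)
    rw [show (k-1) * p.length + j - q' + q' = (k-1) * p.length + j by omega] at rel
    rw [hval (k-1) ((k-1) * p.length + j - q') (by omega),
      hval (k-1) ((k-1) * p.length + j) (by omega),
      if_neg (by omega), if_pos (by omega)] at rel
    exact rel
  have hB2 : (k-2) * p.length + j < q' := by
    by_contra hcon
    push_neg at hcon
    have rel := hper1 ((k-2) * p.length + j - q') (by rw [hlenW]; omega)
    rw [show (k-2) * p.length + j - q' + q' = (k-2) * p.length + j by omega] at rel
    rw [hval (k-1) ((k-2) * p.length + j - q') (by omega),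
      hval (k-1) ((k-2) * p.length + j) (by omega),
      if_neg (by omega), if_neg (by omega)] at rel
    have m1 : ((k-2) * p.length + j) % p.length = j := by
      rw [hmod, Nat.mod_eq_of_lt hj]
    have m2 : ((k-1) * p.length + j - q') % p.length
        = ((k-2) * p.length + j - q') % p.length := by
      rw [show (k-1) * p.length + j - q' = 1 * p.length + ((k-2) * p.length + j - q')
        by omega, hmod]
    rw [m2] at hB1
    rw [m1, hB1] at rel
    exact hb rel.symm
  -- the case k ≥ 4 is impossible
  rcases Nat.lt_or_ge k 4 with hk4 | hk4
  swap
  · have h4l : 4 * p.length ≤ k * p.length := Nat.mul_le_mul_right p.length hk4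
    omega
  have hk23 : k = 2 ∨ k = 3 := by omega
  rcases hk23 with rfl | rfl
  swap
  · -- k = 3
    omega
  -- k = 2
  have hB3 : p.length ≤ j + q' := by
    by_contra hcon
    push_neg at hcon
    have rel := hper1 ((2-1) * p.length + j) (by rw [hlenW]; omega)
    rw [hval (2-1) ((2-1) * p.length + j) (by omega),
      hval (2-1) ((2-1) * p.length + j + q') (by omega),
      if_pos (by omega), if_neg (by omega)] at rel
    have m1 : ((2-1) * p.length + j + q') % p.length = j + q' := by
      rw [show (2-1) * p.length + j + q' = 1 * p.length + (j + q') by omega, hmod,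
        Nat.mod_eq_of_lt hcon]
    rw [m1] at rel
    have rel2 := hper1 j (by rw [hlenW]; omega)
    rw [hval (2-1) j (by omega), hval (2-1) (j + q') (by omega),
      if_neg (by omega), if_neg (by omega)] at rel2
    have m2 : j % p.length = j := Nat.mod_eq_of_lt hj
    have m3 : (j + q') % p.length = j + q' := Nat.mod_eq_of_lt hcon
    rw [m2, m3, ← rel] at rel2
    exact hb rel2
  have hqn : q < p.length := by
    have : q ≠ p.length := fun h => hnd0 (h ▸ dvd_refl p.length)
    omega
  have hq'n : q' < p.length := by
    have : q' ≠ p.length := fun h => hnd1 (h ▸ dvd_refl p.length)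
    omega
  obtain ⟨e, he⟩ := hqdvd
  obtain ⟨e', he'⟩ := hqdvd'
  have h3q : 3 * q = 2 * p.length := by
    have hel : e ≤ 3 := by
      by_contra hc
      push_neg at hc
      have := Nat.mul_le_mul_left q (show 4 ≤ e by omega)
      omega
    have heg : 3 ≤ e := by
      by_contra hc
      push_neg at hc
      have := Nat.mul_le_mul_left q (show e ≤ 2 by omega)
      omega
    have he3 : e = 3 := by omega
    rw [he3] at he
    omega
  have h3q' : 3 * q' = 2 * p.length := by
    have hel : e' ≤ 3 := by
      by_contra hc
      push_neg at hc
      have := Nat.mul_le_mul_left q' (show 4 ≤ e' by omega)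
      omega
    have heg : 3 ≤ e' := by
      by_contra hc
      push_neg at hc
      have := Nat.mul_le_mul_left q' (show e' ≤ 2 by omega)
      omega
    have he3 : e' = 3 := by omega
    rw [he3] at he'
    omega
  have hqq' : q = q' := by omega
  have rel2 := hper1 j (by rw [hlenW]; omega)
  rw [hval (2-1) j (by omega), hval (2-1) (j + q') (by omega),
    if_neg (by omega), if_neg (by omega)] at rel2
  have m2 : j % p.length = j := Nat.mod_eq_of_lt hj
  rw [m2, ← hqq', hA1] at rel2
  exact hb rel2

/-! ### Automata infrastructure -/

theorem dfa_evalFrom_append {σ : Type*} (M : DFA α σ) (s : σ) (x y : List α) :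
    M.evalFrom s (x ++ y) = M.evalFrom (M.evalFrom s x) y := by
  simp [DFA.evalFrom, List.foldl_append]

/-- product DFA -/
def prodDFA {σ τ : Type*} (M : DFA α σ) (A : DFA α τ) (acc : Set (σ × τ)) :
    DFA α (σ × τ) where
  step := fun st c => (M.step st.1 c, A.step st.2 c)
  start := (M.start, A.start)
  accept := acc

theorem prodDFA_evalFrom {σ τ : Type*} (M : DFA α σ) (A : DFA α τ) (acc : Set (σ × τ)) :
    ∀ (x : List α) (s : σ) (t : τ),
      (prodDFA M A acc).evalFrom (s, t) x = (M.evalFrom s x, A.evalFrom t x) := by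
  intro x
  induction x with
  | nil => intro s t; rfl
  | cons c x ih =>
    intro s t
    show (prodDFA M A acc).evalFrom ((prodDFA M A acc).step (s,t) c) x = _
    rw [show (prodDFA M A acc).step (s,t) c = (M.step s c, A.step t c) from rfl, ih]
    rfl

theorem prodDFA_eval {σ τ : Type*} (M : DFA α σ) (A : DFA α τ) (acc : Set (σ × τ))
    (x : List α) : (prodDFA M A acc).eval x = (M.eval x, A.eval x) := by
  apply prodDFA_evalFrom

/-- regular languages are closed under pointwise propositional combinations -/
theorem isRegular_combine {L₁ L₂ : Language α} (h₁ : L₁.IsRegular) (h₂ : L₂.IsRegular)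
    (f : Prop → Prop → Prop) : Language.IsRegular {x : List α | f (x ∈ L₁) (x ∈ L₂)} := by
  obtain ⟨σ, fσ, M, hM⟩ := h₁
  obtain ⟨τ, fτ, A, hA⟩ := h₂
  refine ⟨σ × τ, by infer_instance, prodDFA M A {st | f (st.1 ∈ M.accept) (st.2 ∈ A.accept)}, ?_⟩
  ext x
  rw [DFA.mem_accepts]
  show (prodDFA M A _).evalFrom (M.start, A.start) x ∈ _ ↔ _
  rw [prodDFA_evalFrom]
  show f (M.evalFrom M.start x ∈ M.accept) (A.evalFrom A.start x ∈ A.accept) ↔ _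
  rw [← hM, ← hA]
  rfl

theorem evalFrom_congr_map {σ : Type*} (M : DFA α σ) :
    ∀ (w v : List α), w.map (fun c s => M.step s c) = v.map (fun c s => M.step s c) →
    ∀ s, M.evalFrom s w = M.evalFrom s v := by
  intro w
  induction w with
  | nil =>
    intro v h s
    rw [List.map_nil] at h
    rw [List.eq_nil_of_map_eq_nil h.symm]
  | cons c w ih =>
    intro v h s
    cases v with
    | nil => simp at h
    | cons d v' =>
      rw [List.map_cons, List.map_cons] at h
      have h1 := List.head_eq_of_cons_eq h
      have h2 := List.tail_eq_of_cons_eq h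
      show M.evalFrom (M.step s c) w = M.evalFrom (M.step s d) v'
      rw [show M.step s c = M.step s d from congrFun h1 s]
      exact ih v' h2 _

/-! ### From membership in `powL L \ L` to periods -/

theorem diff_period {L : Language α} {w : List α} (hw : w ∈ powL L \ L) (hne : w ≠ []) :
    ∃ q, 1 ≤ q ∧ q ∣ w.length ∧ 2 * q ≤ w.length ∧ HasPeriod w q := by
  obtain ⟨⟨r, hr, e, hwe⟩, hnL⟩ := hw
  rcases e with _ | _ | e
  · rw [hwe, wpow_zero] at hne; exact absurd rfl hne
  · rw [hwe, wpow_one] at hnL; exact absurd hr hnL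
  · have hrne : r ≠ [] := by
      intro h; rw [h, wpow_nil] at hwe; exact hne hwe
    have hrpos : 0 < r.length := List.length_pos_iff.mpr hrne
    refine ⟨r.length, hrpos, ?_, ?_, ?_⟩
    · exact ⟨e + 2, by rw [hwe, length_wpow, Nat.mul_comm]⟩
    · rw [hwe, length_wpow]; nlinarith
    · rw [hwe]; exact hasPeriod_wpow r (e + 2)

theorem mem_root_exponent {L : Language α} {p : List α} (hp : p ∈ langRoot (powL L \ L)) :
    Primitive p ∧ ∃ k, 2 ≤ k ∧ wpow p k ∈ powL L \ L := by
  obtain ⟨hprim, u, hu, d, hd, hud⟩ := hp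
  refine ⟨hprim, ?_⟩
  rcases Nat.eq_or_lt_of_le hd with hd1 | hd2
  · exfalso
    rw [hud, ← hd1, wpow_one] at hu
    obtain ⟨⟨r, hr, m, hpm⟩, hnL⟩ := hu
    have hm := hprim.2 r m hpm
    rw [hm, wpow_one] at hpm
    rw [hpm] at hnL
    exact hnL hr
  · exact ⟨d, hd2, hud ▸ hu⟩

/-! ### The length bound -/

theorem root_length_le {σ τ : Type*} [Fintype σ] [Fintype τ] (M : DFA α σ) (A : DFA α τ)
    (L : Language α) (hM : M.accepts = powL L) (hA : A.accepts = L)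
    {p : List α} (hp : p ∈ langRoot (powL L \ L)) :
    p.length ≤ Fintype.card σ * Fintype.card τ := by
  set N := Fintype.card σ * Fintype.card τ with hNdef
  by_contra hlen
  push_neg at hlen
  obtain ⟨hprim, k, hk, hmem⟩ := mem_root_exponent hp
  set B := prodDFA M A (∅ : Set (σ × τ)) with hBdef
  -- transfer of membership through states
  have htrans : ∀ w v : List α, B.eval w = B.eval v → (w ∈ powL L \ L ↔ v ∈ powL L \ L) := by
    intro w v h
    rw [prodDFA_eval, prodDFA_eval] at h
    have h1 : M.eval w = M.eval v := congrArg Prod.fst h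
    have h2 : A.eval w = A.eval v := congrArg Prod.snd h
    have e1 : (w ∈ powL L ↔ v ∈ powL L) := by
      rw [← hM, DFA.mem_accepts, DFA.mem_accepts]
      show M.eval w ∈ M.accept ↔ M.eval v ∈ M.accept
      rw [h1]
    have e2 : (w ∈ L ↔ v ∈ L) := by
      rw [← hA, DFA.mem_accepts, DFA.mem_accepts]
      show A.eval w ∈ A.accept ↔ A.eval v ∈ A.accept
      rw [h2]
    constructor
    · rintro ⟨hw1, hw2⟩; exact ⟨e1.mp hw1, fun hc => hw2 (e2.mpr hc)⟩
    · rintro ⟨hw1, hw2⟩; exact ⟨e1.mpr hw1, fun hc => hw2 (e2.mp hc)⟩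
  -- pigeonhole on the states after reading p^(k-1) and a prefix of p
  have hcard : Fintype.card (σ × τ) < Fintype.card (Fin (N + 1)) := by
    rw [Fintype.card_prod, Fintype.card_fin]
    omega
  obtain ⟨t1, t2, hne, heq⟩ := Fintype.exists_ne_map_eq_of_card_lt
    (fun t : Fin (N + 1) => B.eval (wpow p (k-1) ++ p.take t)) hcard
  -- order them
  obtain ⟨a, b, hab, habeq⟩ : ∃ a b : ℕ, a < b ∧ b ≤ N ∧
      B.eval (wpow p (k-1) ++ p.take a) = B.eval (wpow p (k-1) ++ p.take b) := by
    rcases Nat.lt_or_ge (t1 : ℕ) (t2 : ℕ) with h | h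
    · exact ⟨t1, t2, h, by omega, heq⟩
    · have : (t2 : ℕ) < (t1 : ℕ) := by
        rcases Nat.eq_or_lt_of_le h with h' | h'
        · exact absurd (Fin.ext h'.symm) hne
        · exact h'
      exact ⟨t2, t1, this, by omega, heq.symm⟩
  obtain ⟨hbN, habeq⟩ := habeq
  set x := p.take a with hxdef
  set y := (p.take b).drop a with hydef
  set z := p.drop b with hzdef
  have heval_append : ∀ u v : List α, B.eval (u ++ v) = B.evalFrom (B.eval u) v :=
    fun u v => dfa_evalFrom_append B B.start u v
  have hxy : x ++ y = p.take b := by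
    rw [hxdef, hydef, show p.take a = (p.take b).take a by
      rw [List.take_take]; congr 1; omega]
    exact List.take_append_drop a (p.take b)
  have hsplit : p = x ++ y ++ z := by
    rw [hxy, hzdef, List.take_append_drop]
  have hxlen : x.length = a := by
    rw [hxdef, List.length_take]; omega
  have hylen : y.length = b - a := by
    rw [hydef, List.length_drop, List.length_take]; omega
  have hy : y ≠ [] := by
    intro h
    rw [h] at hylen
    simp at hylen
    omega
  have hshort : x.length + y.length < p.length := by omega
  -- pumping
  have hs0 : B.evalFrom (B.eval (wpow p (k-1) ++ x)) y = B.eval (wpow p (k-1) ++ x) := by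
    have e := habeq
    rw [← hxy, show wpow p (k-1) ++ (x ++ y) = (wpow p (k-1) ++ x) ++ y by
      simp [List.append_assoc], heval_append (wpow p (k-1) ++ x) y] at e
    exact e.symm
  have hpump : ∀ i, B.evalFrom (B.eval (wpow p (k-1) ++ x)) (wpow y i)
      = B.eval (wpow p (k-1) ++ x) := by
    intro i
    induction i with
    | zero => rfl
    | succ i ih => rw [wpow_succ, dfa_evalFrom_append, hs0, ih]
  have hWi : ∀ i, B.eval (wpow p (k-1) ++ x ++ wpow y i ++ z) = B.eval (wpow p k) := by
    intro i
    have e1 : wpow p k = (wpow p (k-1) ++ x) ++ (y ++ z) := by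
      conv_lhs => rw [show k = (k-1)+1 by omega, wpow_succ']
      rw [hsplit]
      simp [List.append_assoc]
    have e2 : wpow p (k-1) ++ x ++ wpow y i ++ z
        = (wpow p (k-1) ++ x) ++ (wpow y i ++ z) := by simp [List.append_assoc]
    rw [e1, e2, heval_append (wpow p (k-1) ++ x) (wpow y i ++ z),
      heval_append (wpow p (k-1) ++ x) (y ++ z),
      dfa_evalFrom_append B (B.eval (wpow p (k-1) ++ x)) (wpow y i) z,
      dfa_evalFrom_append B (B.eval (wpow p (k-1) ++ x)) y z,
      hpump i, hs0]
  -- contradiction via the combinatorial core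
  apply step2core hprim hk hsplit hy hshort
  intro i
  have hmemi : wpow p (k-1) ++ x ++ wpow y i ++ z ∈ powL L \ L := (htrans _ _ (hWi i)).mpr hmem
  apply diff_period hmemi
  intro hnil
  have hppos := primitive_length_pos hprim
  have hlen0 := congrArg List.length hnil
  rw [List.length_append, List.length_append, List.length_append, length_wpow,
    List.length_nil] at hlen0
  have hk1 : 1 * p.length ≤ (k-1) * p.length := Nat.mul_le_mul_right _ (by omega)
  omega

/-! ### Injectivity of the action map on the root -/

theorem map_set_eq {β : Type*} (f : α → β) (l : List α) (i : ℕ) (b c : α)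
    (hc : l[i]? = some c) (hfc : f c = f b) : (l.set i b).map f = l.map f := by
  have hilt : i < l.length := by
    by_contra h'
    rw [List.getElem?_eq_none (by omega)] at hc
    simp at hc
  apply List.ext_getElem?
  intro x
  rw [List.getElem?_map, List.getElem?_map, List.getElem?_set]
  by_cases h : i = x
  · subst h
    rw [if_pos rfl, if_pos hilt, hc]
    simp only [Option.map_some]
    rw [hfc]
  · rw [if_neg h]

theorem root_injOn {σ τ : Type*} [Fintype σ] [Fintype τ] (M : DFA α σ) (A : DFA α τ)
    (L : Language α) (hM : M.accepts = powL L) (hA : A.accepts = L)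
    {p p' : List α} (hp : p ∈ langRoot (powL L \ L)) (hp' : p' ∈ langRoot (powL L \ L))
    (hmap : p.map (fun c => ((fun s => M.step s c : σ → σ), (fun t => A.step t c : τ → τ)))
      = p'.map (fun c => ((fun s => M.step s c : σ → σ), (fun t => A.step t c : τ → τ)))) :
    p = p' := by
  set act : α → (σ → σ) × (τ → τ) :=
    fun c => ((fun s => M.step s c : σ → σ), (fun t => A.step t c : τ → τ)) with hactdef
  by_contra hne
  have hlen : p.length = p'.length := by
    have := congrArg List.length hmap
    simpa using this
  have hdiff : ∃ j, j < p.length ∧ p[j]? ≠ p'[j]? := by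
    by_contra hc
    push_neg at hc
    apply hne
    apply List.ext_getElem?
    intro i
    by_cases hi : i < p.length
    · exact hc i hi
    · rw [List.getElem?_eq_none (by omega), List.getElem?_eq_none (by omega)]
  obtain ⟨j, hj, hjne⟩ := hdiff
  obtain ⟨hprim, k, hk, hmem⟩ := mem_root_exponent hp
  have hj' : j < p'.length := by omega
  obtain ⟨b, hbval⟩ : ∃ b, p'[j]? = some b := ⟨p'[j]'hj', List.getElem?_eq_getElem _⟩
  obtain ⟨pj, hpj⟩ : ∃ pj, p[j]? = some pj := ⟨p[j]'hj, List.getElem?_eq_getElem _⟩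
  have hbne : p[j]? ≠ some b := fun h => hjne (h.trans hbval.symm)
  -- actions at position j agree
  have hact : act pj = act b := by
    have h1 : (p.map act)[j]? = (p'.map act)[j]? := by rw [hmap]
    rw [List.getElem?_map, List.getElem?_map, hpj, hbval] at h1
    simpa using h1
  have hactM : (fun (c : α) (s : σ) => M.step s c) pj = (fun (c : α) (s : σ) => M.step s c) b :=
    congrArg Prod.fst hact
  have hactA : (fun (c : α) (t : τ) => A.step t c) pj = (fun (c : α) (t : τ) => A.step t c) b :=
    congrArg Prod.snd hact
  have hslotlt : ∀ T, T < k → T * p.length + j < (wpow p k).length := by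
    intro T hT
    rw [length_wpow]
    have h1 := Nat.mul_le_mul_right p.length (show T + 1 ≤ k by omega)
    have h2 : (T + 1) * p.length = T * p.length + p.length := by ring
    omega
  have hslotval : ∀ T, T < k → (wpow p k)[T * p.length + j]? = some pj := by
    intro T hT
    rw [getElem?_wpow p k _ (hslotlt T hT), Nat.mul_comm, Nat.mul_add_mod,
      Nat.mod_eq_of_lt hj, hpj]
  have key : ∀ T, T < k → (wpow p k).set (T * p.length + j) b ∈ powL L \ L := by
    intro T hT
    have hmapM := map_set_eq (fun (c : α) (s : σ) => M.step s c) (wpow p k)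
      (T * p.length + j) b pj (hslotval T hT) hactM
    have hmapA := map_set_eq (fun (c : α) (t : τ) => A.step t c) (wpow p k)
      (T * p.length + j) b pj (hslotval T hT) hactA
    have hMst : M.eval ((wpow p k).set (T * p.length + j) b) = M.eval (wpow p k) :=
      evalFrom_congr_map M _ _ hmapM M.start
    have hAst : A.eval ((wpow p k).set (T * p.length + j) b) = A.eval (wpow p k) :=
      evalFrom_congr_map A _ _ hmapA A.start
    constructor
    · rw [← hM]
      show M.eval _ ∈ M.accept
      rw [hMst]
      have h5 := hmem.1
      rw [← hM] at h5
      exact h5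
    · intro hc
      rw [← hA] at hc
      have hc' : A.eval ((wpow p k).set (T * p.length + j) b) ∈ A.accept := hc
      rw [hAst] at hc'
      apply hmem.2
      rw [← hA]
      exact hc'
  apply hybrid_core hj hbne hk
  intro T hT
  have hWlen : ((wpow p k).set (T * p.length + j) b).length = k * p.length := by
    rw [List.length_set, length_wpow]
  have hWne : (wpow p k).set (T * p.length + j) b ≠ [] := by
    intro h
    have h6 := congrArg List.length h
    rw [hWlen, List.length_nil] at h6
    have hppos := primitive_length_pos hprim
    have h7 := Nat.mul_le_mul_right p.length hk
    omega
  obtain ⟨q, h1, h2, h3, h4⟩ := diff_period (key T hT) hWne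
  rw [hWlen] at h2 h3
  exact ⟨q, h1, h2, h3, h4⟩

/-! ### Finiteness of the root -/

theorem root_finite {σ τ : Type*} [Fintype σ] [Fintype τ] (M : DFA α σ) (A : DFA α τ)
    (L : Language α) (hM : M.accepts = powL L) (hA : A.accepts = L) :
    Set.Finite (langRoot (powL L \ L)) := by
  classical
  set Φ : List α → List ((σ → σ) × (τ → τ)) :=
    List.map (fun c => ((fun s => M.step s c : σ → σ), (fun t => A.step t c : τ → τ)))
    with hΦdef
  apply Set.Finite.of_finite_image (f := Φ)
  · apply Set.Finite.subset
      (List.finite_length_le ((σ → σ) × (τ → τ)) (Fintype.card σ * Fintype.card τ))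
    rintro _ ⟨p, hp, rfl⟩
    show (Φ p).length ≤ _
    rw [hΦdef, List.length_map]
    exact root_length_le M A L hM hA hp
  · intro p hp p' hp' hmap
    exact root_injOn M A L hM hA hp hp' hmap

end Fz

/-- Fazekas: for a regular language `L`, `pow(L)` is regular iff `pow(L) \ L` is a
regular language with finite root. -/
theorem fazekas_pow_regular_iff {α : Type*} (L : Language α) (hL : L.IsRegular) :
    (powL L).IsRegular ↔
      (powL L \ L).IsRegular ∧ Set.Finite (langRoot (powL L \ L)) := by
  constructor
  · intro hpow
    obtain ⟨τ, fτ, A, hA⟩ := hL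
    obtain ⟨σ, fσ, M, hM⟩ := hpow
    constructor
    · have hcomb := Fz.isRegular_combine ⟨σ, fσ, M, hM⟩ ⟨τ, fτ, A, hA⟩ (fun a b => a ∧ ¬ b)
      have hset : (powL L \ L) = {x : List α | x ∈ powL L ∧ ¬ x ∈ L} := rfl
      rw [hset]
      exact hcomb
    · exact Fz.root_finite M A L hM hA
  · rintro ⟨hdiff, -⟩
    have hunion := Fz.isRegular_combine hL hdiff (fun a b => a ∨ b)
    have hset : powL L = {x : List α | x ∈ L ∨ x ∈ powL L \ L} := by
      ext u
      constructor
      · intro hu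
        by_cases hL' : u ∈ L
        · exact Or.inl hL'
        · exact Or.inr ⟨hu, hL'⟩
      · rintro (hu | ⟨hu, -⟩)
        · exact ⟨u, hu, 1, (Fz.wpow_one u).symm⟩
        · exact hu
    rw [hset]
    exact hunion
end
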